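/- arXiv:1009.4807 — 3 statements merged into one kernel-verified Lean document; each statement's English description precedes it below -/
import Mathlib

section
/- There is a constant K > 0 such that for every real Hilbert space H, every n ∈ ℕ, every real n×n matrix (a_{ij}), and all vectors x_1,…,x_n, y_1,…,y_n in the closed unit ball of H, one has |∑_{i,j=1}^n a_{ij} ⟨x_i, y_j⟩| ≤ K · sup{ |∑_{i,j=1}^n a_{ij} s_i t_j| : s_i, t_j ∈ ℝ, |s_i| ≤ 1, |t_j| ≤ 1 }. (Grothendieck's Inequality, Lindenstrauss–Pełczyński version.) -/
open scoped BigOperators RealInnerProductSpace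

noncomputable section

namespace GIaux

def χ (b : Bool) : ℝ := if b then 1 else -1

variable {ι : Type} [Fintype ι] [DecidableEq ι]

def rsum (w : ι → ℝ) (s : Finset ι) (ε : ι → Bool) : ℝ := ∑ k ∈ s, χ (ε k) * w k

omit [Fintype ι] in
lemma rsum_insert (w : ι → ℝ) {k : ι} {s : Finset ι} (hk : k ∉ s) (ε : ι → Bool) :
    rsum w (insert k s) ε = χ (ε k) * w k + rsum w s ε := by
  simp [rsum, Finset.sum_insert hk]

/-- flip-averaging over the coordinate `k`. -/
lemma flip_avg (f : ℝ → ℝ → ℝ) (w z : ι → ℝ) {k : ι} {s : Finset ι} (hk : k ∉ s) :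
    ∑ ε : ι → Bool, f (rsum w (insert k s) ε) (rsum z (insert k s) ε)
      = ∑ ε : ι → Bool,
          (f (rsum w s ε + w k) (rsum z s ε + z k)
            + f (rsum w s ε - w k) (rsum z s ε - z k)) / 2 := by
  have hinv : Function.Involutive (fun ε : ι → Bool => Function.update ε k (!(ε k))) := by
    intro ε
    funext l
    by_cases h : l = k
    · subst h; simp [Function.update]
    · simp [Function.update, h]
  set σ : Equiv.Perm (ι → Bool) := hinv.toPerm _ with hσ
  have hσapp : ∀ ε, σ ε = Function.update ε k (!(ε k)) := fun ε => rfl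
  have hrs : ∀ (w : ι → ℝ) (ε : ι → Bool), rsum w s (σ ε) = rsum w s ε := by
    intro w ε
    refine Finset.sum_congr rfl fun l hl => ?_
    have hlk : l ≠ k := fun h => hk (h ▸ hl)
    rw [hσapp]
    simp [Function.update, hlk]
  set g : (ι → Bool) → ℝ := fun ε => f (rsum w (insert k s) ε) (rsum z (insert k s) ε) with hg
  have e1 : ∑ ε : ι → Bool, g (σ ε) = ∑ ε : ι → Bool, g ε := Equiv.sum_comp σ g
  have key : ∀ ε : ι → Bool,
      g (σ ε) = f (rsum w s ε + (- χ (ε k)) * w k) (rsum z s ε + (- χ (ε k)) * z k) := by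
    intro ε
    rw [hg]
    simp only []
    rw [rsum_insert w hk, rsum_insert z hk, hrs w, hrs z]
    have hχ : χ (σ ε k) = - χ (ε k) := by
      rw [hσapp]
      cases h : ε k <;> simp [Function.update, h, χ]
    rw [hχ]
    ring_nf
  calc ∑ ε : ι → Bool, g ε
      = (∑ ε : ι → Bool, g ε + ∑ ε : ι → Bool, g (σ ε)) / 2 := by rw [e1]; ring
    _ = ∑ ε : ι → Bool, (g ε + g (σ ε)) / 2 := by
        rw [← Finset.sum_add_distrib, Finset.sum_div]
    _ = _ := by
        refine Finset.sum_congr rfl fun ε _ => ?_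
        rw [key ε, hg]
        simp only []
        rw [rsum_insert w hk, rsum_insert z hk]
        cases h : ε k <;> simp [χ, h] <;> ring

lemma L1 (w z : ι → ℝ) (s : Finset ι) :
    ∑ ε : ι → Bool, rsum w s ε * rsum z s ε
      = (Fintype.card (ι → Bool) : ℝ) * ∑ k ∈ s, w k * z k := by
  induction s using Finset.induction_on with
  | empty => simp [rsum]
  | insert _ _ hk ih =>
    rename_i k s
    rw [flip_avg (fun a b => a * b) w z hk, Finset.sum_insert hk]
    have heq : ∀ ε : ι → Bool,
        ((rsum w s ε + w k) * (rsum z s ε + z k)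
          + (rsum w s ε - w k) * (rsum z s ε - z k)) / 2
        = rsum w s ε * rsum z s ε + w k * z k := by intro ε; ring
    rw [Finset.sum_congr rfl (fun ε _ => heq ε), Finset.sum_add_distrib, ih,
      Finset.sum_const, nsmul_eq_mul, Finset.card_univ]
    ring

lemma L2 (w : ι → ℝ) (s : Finset ι) :
    ∑ ε : ι → Bool, (rsum w s ε) ^ 2 = (Fintype.card (ι → Bool) : ℝ) * ∑ k ∈ s, (w k) ^ 2 := by
  have := L1 w w s
  simpa [sq] using this

lemma L4 (w : ι → ℝ) (s : Finset ι) :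
    ∑ ε : ι → Bool, (rsum w s ε) ^ 4
      ≤ 3 * (Fintype.card (ι → Bool) : ℝ) * (∑ k ∈ s, (w k) ^ 2) ^ 2 := by
  induction s using Finset.induction_on with
  | empty => simp [rsum]
  | insert _ _ hk ih =>
    rename_i k s
    have h4 : ∑ ε : ι → Bool, (rsum w (insert k s) ε) ^ 4
        = ∑ ε : ι → Bool, ((rsum w s ε) ^ 4 + 6 * (rsum w s ε) ^ 2 * (w k) ^ 2 + (w k) ^ 4) := by
      rw [flip_avg (fun a _ => a ^ 4) w w hk]
      refine Finset.sum_congr rfl fun ε _ => ?_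
      ring
    have h2 := L2 w s
    have hA : (0:ℝ) ≤ ∑ k ∈ s, (w k) ^ 2 := Finset.sum_nonneg fun _ _ => sq_nonneg _
    have hN : (0:ℝ) ≤ (Fintype.card (ι → Bool) : ℝ) := Nat.cast_nonneg _
    have hsum : ∑ ε : ι → Bool, 6 * (rsum w s ε) ^ 2 * (w k) ^ 2
        = 6 * ((Fintype.card (ι → Bool) : ℝ) * ∑ k ∈ s, (w k) ^ 2) * (w k) ^ 2 := by
      calc ∑ ε : ι → Bool, 6 * (rsum w s ε) ^ 2 * (w k) ^ 2
          = (∑ ε : ι → Bool, (rsum w s ε) ^ 2) * (6 * (w k) ^ 2) := by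
            rw [Finset.sum_mul]
            exact Finset.sum_congr rfl fun ε _ => by ring
        _ = _ := by rw [h2]; ring
    rw [h4, Finset.sum_add_distrib, Finset.sum_add_distrib, Finset.sum_const, nsmul_eq_mul,
      Finset.card_univ, hsum, Finset.sum_insert hk]
    have hpos : (0:ℝ) ≤ (Fintype.card (ι → Bool) : ℝ) * ((w k) ^ 2) ^ 2 :=
      mul_nonneg hN (sq_nonneg _)
    nlinarith [ih, hpos]

/-! ### Truncation -/

def tr (t : ℝ) : ℝ := max (-8) (min 8 t)

lemma tr_abs_le (t : ℝ) : |tr t| ≤ 8 := by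
  rw [abs_le]
  constructor
  · exact le_max_left _ _
  · exact max_le (by norm_num) (min_le_left _ _)

lemma tr_sq_le (t : ℝ) : (tr t) ^ 2 ≤ t ^ 2 := by
  rcases le_total t (-8) with h | h
  · have : tr t = -8 := by
      have h1 : min 8 t = t := min_eq_right (by linarith)
      rw [tr, h1]
      exact max_eq_left (by linarith)
    rw [this]; nlinarith
  · rcases le_total 8 t with h2 | h2
    · have : tr t = 8 := by
        have h1 : min 8 t = 8 := min_eq_left h2
        rw [tr, h1]
        exact max_eq_right (by norm_num)
      rw [this]; nlinarith
    · have : tr t = t := by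
        have h1 : min 8 t = t := min_eq_right h2
        rw [tr, h1]
        exact max_eq_right h
      rw [this]

lemma psi_sq_le (t : ℝ) : (t - tr t) ^ 2 ≤ t ^ 4 / 64 := by
  rcases le_total t (-8) with h | h
  · have : tr t = -8 := by
      have h1 : min 8 t = t := min_eq_right (by linarith)
      rw [tr, h1]; exact max_eq_left (by linarith)
    rw [this]; nlinarith [sq_nonneg (t + 8), sq_nonneg t, sq_nonneg (t^2 - 8*t - 64)]
  · rcases le_total 8 t with h2 | h2
    · have : tr t = 8 := by
        have h1 : min 8 t = 8 := min_eq_left h2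
        rw [tr, h1]; exact max_eq_right (by norm_num)
      rw [this]; nlinarith [sq_nonneg (t - 8), sq_nonneg (t^2 + 8*t - 64)]
    · have : tr t = t := by
        have h1 : min 8 t = t := min_eq_right h2
        rw [tr, h1]; exact max_eq_right h
      rw [this]
      have : t ^ 4 / 64 ≥ 0 := by positivity
      simpa using this

/-! ### The bilinear sup -/

def gsup (n : ℕ) (a : Fin n → Fin n → ℝ) : ℝ :=
  sSup {r : ℝ | ∃ s t : Fin n → ℝ, (∀ i, |s i| ≤ 1) ∧ (∀ j, |t j| ≤ 1) ∧
    r = |∑ i, ∑ j, a i j * s i * t j|}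

lemma gsup_bdd (n : ℕ) (a : Fin n → Fin n → ℝ) :
    BddAbove {r : ℝ | ∃ s t : Fin n → ℝ, (∀ i, |s i| ≤ 1) ∧ (∀ j, |t j| ≤ 1) ∧
      r = |∑ i, ∑ j, a i j * s i * t j|} := by
  refine ⟨∑ i, ∑ j, |a i j|, ?_⟩
  rintro r ⟨s, t, hs, ht, rfl⟩
  calc |∑ i, ∑ j, a i j * s i * t j| ≤ ∑ i, |∑ j, a i j * s i * t j| :=
        Finset.abs_sum_le_sum_abs _ _
    _ ≤ ∑ i, ∑ j, |a i j * s i * t j| :=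
        Finset.sum_le_sum fun i _ => Finset.abs_sum_le_sum_abs _ _
    _ ≤ ∑ i, ∑ j, |a i j| := by
        refine Finset.sum_le_sum fun i _ => Finset.sum_le_sum fun j _ => ?_
        rw [abs_mul, abs_mul]
        calc |a i j| * |s i| * |t j| ≤ |a i j| * 1 * |t j| :=
              mul_le_mul_of_nonneg_right
                (mul_le_mul_of_nonneg_left (hs i) (abs_nonneg _)) (abs_nonneg _)
          _ ≤ |a i j| * 1 * 1 :=
              mul_le_mul_of_nonneg_left (ht j) (by positivity)
          _ = |a i j| := by ring

lemma le_gsup {n : ℕ} (a : Fin n → Fin n → ℝ) (s t : Fin n → ℝ)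
    (hs : ∀ i, |s i| ≤ 1) (ht : ∀ j, |t j| ≤ 1) :
    |∑ i, ∑ j, a i j * s i * t j| ≤ gsup n a :=
  le_csSup (gsup_bdd n a) ⟨s, t, hs, ht, rfl⟩

lemma gsup_nonneg (n : ℕ) (a : Fin n → Fin n → ℝ) : 0 ≤ gsup n a := by
  have := le_gsup a (fun _ => 0) (fun _ => 0) (fun i => by norm_num) (fun j => by norm_num)
  simpa using this

lemma abs_entry_le_gsup {n : ℕ} (a : Fin n → Fin n → ℝ) (i j : Fin n) :
    |a i j| ≤ gsup n a := by
  have h := le_gsup a (fun i' => if i' = i then 1 else 0) (fun j' => if j' = j then 1 else 0)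
    (fun i' => by show |(if i' = i then (1:ℝ) else 0)| ≤ 1; split <;> norm_num)
    (fun j' => by show |(if j' = j then (1:ℝ) else 0)| ≤ 1; split <;> norm_num)
  have he : ∑ i', ∑ j', a i' j' * (if i' = i then (1:ℝ) else 0) * (if j' = j then 1 else 0)
      = a i j := by
    rw [Finset.sum_eq_single i]
    · rw [Finset.sum_eq_single j]
      · simp
      · intro b _ hb; simp [hb]
      · simp
    · intro b _ hb
      simp [hb]
    · simp
  rwa [he] at h

/-! ### The inductive property -/

def GIPn (n : ℕ) (K : ℝ) : Prop :=
  ∀ (ι : Type) [Fintype ι] (a : Fin n → Fin n → ℝ) (u v : Fin n → ι → ℝ),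
    (∀ i, ∑ k, (u i k) ^ 2 ≤ 1) → (∀ j, ∑ k, (v j k) ^ 2 ≤ 1) →
    |∑ i, ∑ j, a i j * ∑ k, u i k * v j k| ≤ K * gsup n a

lemma gipn_mono {n : ℕ} {K K' : ℝ} (h : GIPn n K) (hKK' : K ≤ K') : GIPn n K' := by
  intro ι _ a u v hu hv
  refine (h ι a u v hu hv).trans ?_
  exact mul_le_mul_of_nonneg_right hKK' (gsup_nonneg n a)

lemma gipn_init (n : ℕ) : GIPn n ((n : ℝ) ^ 2) := by
  intro ι _ a u v hu hv
  have hip : ∀ i j, |∑ k, u i k * v j k| ≤ 1 := by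
    intro i j
    have hcs := Finset.sum_mul_sq_le_sq_mul_sq Finset.univ (u i) (v j)
    have hu' : (0:ℝ) ≤ ∑ k, (u i k) ^ 2 := Finset.sum_nonneg fun _ _ => sq_nonneg _
    have h1 : (∑ k, u i k * v j k) ^ 2 ≤ 1 := by
      refine hcs.trans ?_
      have := hu i
      have := hv j
      have hv' : (0:ℝ) ≤ ∑ k, (v j k) ^ 2 := Finset.sum_nonneg fun k _ => sq_nonneg (v j k)
      nlinarith
    exact (sq_le_one_iff_abs_le_one _).mp h1
  calc |∑ i, ∑ j, a i j * ∑ k, u i k * v j k|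
      ≤ ∑ i, ∑ j, |a i j * ∑ k, u i k * v j k| :=
        (Finset.abs_sum_le_sum_abs _ _).trans
          (Finset.sum_le_sum fun i _ => Finset.abs_sum_le_sum_abs _ _)
    _ ≤ ∑ i, ∑ j, gsup n a := by
        refine Finset.sum_le_sum fun i _ => Finset.sum_le_sum fun j _ => ?_
        rw [abs_mul]
        calc |a i j| * |∑ k, u i k * v j k| ≤ |a i j| * 1 :=
              mul_le_mul_of_nonneg_left (hip i j) (abs_nonneg _)
          _ = |a i j| := mul_one _
          _ ≤ gsup n a := abs_entry_le_gsup a i j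
    _ = (n : ℝ) ^ 2 * gsup n a := by
        simp [Finset.sum_const]
        ring

set_option maxHeartbeats 2000000 in
lemma gipn_boot {n : ℕ} {C : ℝ} (hC : 0 ≤ C) (h : GIPn n C) : GIPn n (64 + C / 2) := by
  intro ι _ a u v hu hv
  classical
  set N : ℝ := (Fintype.card (ι → Bool) : ℝ) with hNdef
  have hNpos : 0 < N := by
    rw [hNdef]
    exact_mod_cast Fintype.card_pos
  set F : Fin n → (ι → Bool) → ℝ := fun i ε => rsum (u i) Finset.univ ε with hF
  set G : Fin n → (ι → Bool) → ℝ := fun j ε => rsum (v j) Finset.univ ε with hG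
  -- reproducing identity
  have hFG : ∀ i j, ∑ k, u i k * v j k = (∑ ε : ι → Bool, F i ε * G j ε) / N := by
    intro i j
    rw [hF, hG]
    simp only []
    rw [L1 (u i) (v j) Finset.univ]
    exact (mul_div_cancel_left₀ _ hNpos.ne').symm
  -- second and fourth moment bounds
  have hF2 : ∀ i, ∑ ε : ι → Bool, (F i ε) ^ 2 ≤ N := by
    intro i
    rw [hF]; simp only []
    rw [L2 (u i) Finset.univ]
    calc N * ∑ k, (u i k) ^ 2 ≤ N * 1 := mul_le_mul_of_nonneg_left (hu i) hNpos.le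
      _ = N := mul_one _
  have hG2 : ∀ j, ∑ ε : ι → Bool, (G j ε) ^ 2 ≤ N := by
    intro j
    rw [hG]; simp only []
    rw [L2 (v j) Finset.univ]
    calc N * ∑ k, (v j k) ^ 2 ≤ N * 1 := mul_le_mul_of_nonneg_left (hv j) hNpos.le
      _ = N := mul_one _
  have hF4 : ∀ i, ∑ ε : ι → Bool, (F i ε) ^ 4 ≤ 3 * N := by
    intro i
    refine (by rw [hF] : ∑ ε : ι → Bool, (F i ε) ^ 4
      = ∑ ε : ι → Bool, (rsum (u i) Finset.univ ε) ^ 4).trans_le ?_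
    refine (L4 (u i) Finset.univ).trans ?_
    have h1 : (∑ k, (u i k) ^ 2) ^ 2 ≤ 1 := by
      have h0 : (0:ℝ) ≤ ∑ k, (u i k) ^ 2 := Finset.sum_nonneg fun _ _ => sq_nonneg _
      nlinarith [hu i]
    nlinarith [hNpos.le]
  have hG4 : ∀ j, ∑ ε : ι → Bool, (G j ε) ^ 4 ≤ 3 * N := by
    intro j
    refine (by rw [hG] : ∑ ε : ι → Bool, (G j ε) ^ 4
      = ∑ ε : ι → Bool, (rsum (v j) Finset.univ ε) ^ 4).trans_le ?_
    refine (L4 (v j) Finset.univ).trans ?_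
    have h1 : (∑ k, (v j k) ^ 2) ^ 2 ≤ 1 := by
      have h0 : (0:ℝ) ≤ ∑ k, (v j k) ^ 2 := Finset.sum_nonneg fun _ _ => sq_nonneg _
      nlinarith [hv j]
    nlinarith [hNpos.le]
  -- truncation pieces
  have hPsiF2 : ∀ i, ∑ ε : ι → Bool, (F i ε - tr (F i ε)) ^ 2 ≤ 3 * N / 64 := by
    intro i
    calc ∑ ε : ι → Bool, (F i ε - tr (F i ε)) ^ 2 ≤ ∑ ε : ι → Bool, (F i ε) ^ 4 / 64 :=
          Finset.sum_le_sum fun ε _ => psi_sq_le _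
      _ = (∑ ε : ι → Bool, (F i ε) ^ 4) / 64 := by rw [Finset.sum_div]
      _ ≤ 3 * N / 64 := by linarith [hF4 i]
  have hPsiG2 : ∀ j, ∑ ε : ι → Bool, (G j ε - tr (G j ε)) ^ 2 ≤ 3 * N / 64 := by
    intro j
    calc ∑ ε : ι → Bool, (G j ε - tr (G j ε)) ^ 2 ≤ ∑ ε : ι → Bool, (G j ε) ^ 4 / 64 :=
          Finset.sum_le_sum fun ε _ => psi_sq_le _
      _ = (∑ ε : ι → Bool, (G j ε) ^ 4) / 64 := by rw [Finset.sum_div]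
      _ ≤ 3 * N / 64 := by linarith [hG4 j]
  have hTrF2 : ∀ i, ∑ ε : ι → Bool, (tr (F i ε)) ^ 2 ≤ N := fun i =>
    (Finset.sum_le_sum fun ε _ => tr_sq_le (F i ε)).trans (hF2 i)
  -- the three pieces
  set T1 : ℝ := ∑ ε : ι → Bool, ∑ i, ∑ j, a i j * (tr (F i ε) * tr (G j ε)) with hT1
  set T2 : ℝ := ∑ i, ∑ j, a i j * (∑ ε : ι → Bool, (F i ε - tr (F i ε)) * G j ε) with hT2
  set T3 : ℝ := ∑ i, ∑ j, a i j * (∑ ε : ι → Bool, tr (F i ε) * (G j ε - tr (G j ε))) with hT3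
  -- the splitting
  have hsplit : ∑ i, ∑ j, a i j * ∑ k, u i k * v j k = (T1 + T2 + T3) / N := by
    have hpt : ∀ i j, a i j * ∑ k, u i k * v j k
        = (a i j * (∑ ε : ι → Bool, tr (F i ε) * tr (G j ε))
          + a i j * (∑ ε : ι → Bool, (F i ε - tr (F i ε)) * G j ε)
          + a i j * (∑ ε : ι → Bool, tr (F i ε) * (G j ε - tr (G j ε)))) / N := by
      intro i j
      rw [hFG i j, ← mul_div_assoc]
      congr 1
      have hdecomp : ∑ ε : ι → Bool, F i ε * G j ε
          = ∑ ε : ι → Bool, tr (F i ε) * tr (G j ε)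
            + ∑ ε : ι → Bool, (F i ε - tr (F i ε)) * G j ε
            + ∑ ε : ι → Bool, tr (F i ε) * (G j ε - tr (G j ε)) := by
        rw [← Finset.sum_add_distrib, ← Finset.sum_add_distrib]
        refine Finset.sum_congr rfl fun ε _ => ?_
        ring
      rw [hdecomp]
      ring
    have hT1' : ∑ i, ∑ j, a i j * (∑ ε : ι → Bool, tr (F i ε) * tr (G j ε)) = T1 := by
      rw [hT1]
      calc ∑ i, ∑ j, a i j * (∑ ε : ι → Bool, tr (F i ε) * tr (G j ε))
          = ∑ i, ∑ j, ∑ ε : ι → Bool, a i j * (tr (F i ε) * tr (G j ε)) := by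
            refine Finset.sum_congr rfl fun i _ => Finset.sum_congr rfl fun j _ => ?_
            rw [Finset.mul_sum]
        _ = ∑ i, ∑ ε : ι → Bool, ∑ j, a i j * (tr (F i ε) * tr (G j ε)) :=
            Finset.sum_congr rfl fun i _ => Finset.sum_comm
        _ = ∑ ε : ι → Bool, ∑ i, ∑ j, a i j * (tr (F i ε) * tr (G j ε)) := Finset.sum_comm
    have hsum3 : ∑ i, ∑ j, (a i j * (∑ ε : ι → Bool, tr (F i ε) * tr (G j ε))
          + a i j * (∑ ε : ι → Bool, (F i ε - tr (F i ε)) * G j ε)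
          + a i j * (∑ ε : ι → Bool, tr (F i ε) * (G j ε - tr (G j ε))))
        = T1 + T2 + T3 := by
      simp only [Finset.sum_add_distrib]
      rw [hT1', ← hT2, ← hT3]
    calc ∑ i, ∑ j, a i j * ∑ k, u i k * v j k
        = ∑ i, ∑ j, (a i j * (∑ ε : ι → Bool, tr (F i ε) * tr (G j ε))
          + a i j * (∑ ε : ι → Bool, (F i ε - tr (F i ε)) * G j ε)
          + a i j * (∑ ε : ι → Bool, tr (F i ε) * (G j ε - tr (G j ε)))) / N :=
          Finset.sum_congr rfl fun i _ => Finset.sum_congr rfl fun j _ => hpt i j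
      _ = (∑ i, ∑ j, (a i j * (∑ ε : ι → Bool, tr (F i ε) * tr (G j ε))
          + a i j * (∑ ε : ι → Bool, (F i ε - tr (F i ε)) * G j ε)
          + a i j * (∑ ε : ι → Bool, tr (F i ε) * (G j ε - tr (G j ε))))) / N := by
          simp only [Finset.sum_div]
      _ = (T1 + T2 + T3) / N := by rw [hsum3]
  -- bound on T1
  have hT1bound : |T1| ≤ 64 * N * gsup n a := by
    have hper : ∀ ε : ι → Bool, |∑ i, ∑ j, a i j * (tr (F i ε) * tr (G j ε))| ≤ 64 * gsup n a := by
      intro ε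
      have hb := le_gsup a (fun i => tr (F i ε) / 8) (fun j => tr (G j ε) / 8)
        (fun i => by
          rw [abs_div]
          have := tr_abs_le (F i ε)
          rw [abs_of_pos (by norm_num : (0:ℝ) < 8)]
          linarith)
        (fun j => by
          rw [abs_div]
          have := tr_abs_le (G j ε)
          rw [abs_of_pos (by norm_num : (0:ℝ) < 8)]
          linarith)
      have he : ∑ i, ∑ j, a i j * (tr (F i ε) / 8) * (tr (G j ε) / 8)
          = (∑ i, ∑ j, a i j * (tr (F i ε) * tr (G j ε))) / 64 := by
        rw [Finset.sum_div]
        refine Finset.sum_congr rfl fun i _ => ?_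
        rw [Finset.sum_div]
        refine Finset.sum_congr rfl fun j _ => ?_
        ring
      rw [he, abs_div, abs_of_pos (by norm_num : (0:ℝ) < 64)] at hb
      linarith
    calc |T1| ≤ ∑ ε : ι → Bool, |∑ i, ∑ j, a i j * (tr (F i ε) * tr (G j ε))| :=
          Finset.abs_sum_le_sum_abs _ _
      _ ≤ ∑ _ε : ι → Bool, 64 * gsup n a := Finset.sum_le_sum fun ε _ => hper ε
      _ = N * (64 * gsup n a) := by rw [Finset.sum_const, nsmul_eq_mul, Finset.card_univ]
      _ = 64 * N * gsup n a := by ring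
  -- square root facts
  have h3 : (Real.sqrt 3) ^ 2 = 3 := Real.sq_sqrt (by norm_num)
  have h3pos : 0 < Real.sqrt 3 := Real.sqrt_pos.mpr (by norm_num)
  have h3le : Real.sqrt 3 ≤ 2 := by nlinarith
  have hsN : (Real.sqrt N) ^ 2 = N := Real.sq_sqrt hNpos.le
  have hsNpos : 0 < Real.sqrt N := Real.sqrt_pos.mpr hNpos
  -- bound on T2 via the inductive hypothesis
  have hT2bound : |T2| ≤ N * (C * gsup n a) / 4 := by
    set c : ℝ := 8 / (Real.sqrt 3 * Real.sqrt N) with hc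
    have hcpos : 0 < c := by positivity
    have hc2 : c ^ 2 = 64 / (3 * N) := by
      rw [hc, div_pow, mul_pow, h3, hsN]
      norm_num
    set u' : Fin n → (ι → Bool) → ℝ := fun i ε => (F i ε - tr (F i ε)) * c with hu'
    set v' : Fin n → (ι → Bool) → ℝ := fun j ε => G j ε / Real.sqrt N with hv'
    have hu'1 : ∀ i, ∑ ε : ι → Bool, (u' i ε) ^ 2 ≤ 1 := by
      intro i
      rw [hu']
      simp only [mul_pow]
      rw [← Finset.sum_mul, hc2]
      calc (∑ ε : ι → Bool, (F i ε - tr (F i ε)) ^ 2) * (64 / (3 * N))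
          ≤ (3 * N / 64) * (64 / (3 * N)) :=
            mul_le_mul_of_nonneg_right (hPsiF2 i) (by positivity)
        _ = 1 := by field_simp
    have hv'1 : ∀ j, ∑ ε : ι → Bool, (v' j ε) ^ 2 ≤ 1 := by
      intro j
      rw [hv']
      simp only [div_pow]
      rw [← Finset.sum_div, hsN]
      rw [div_le_one hNpos]
      simpa using hG2 j
    have happ := h (ι → Bool) a u' v' hu'1 hv'1
    have hinner : ∀ i j, ∑ ε : ι → Bool, u' i ε * v' j ε
        = (c / Real.sqrt N) * ∑ ε : ι → Bool, (F i ε - tr (F i ε)) * G j ε := by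
      intro i j
      rw [hu', hv', Finset.mul_sum]
      refine Finset.sum_congr rfl fun ε _ => ?_
      field_simp
    have hd : c / Real.sqrt N = 8 / (Real.sqrt 3 * N) := by
      rw [hc, div_div, mul_assoc, Real.mul_self_sqrt hNpos.le]
    have hre : ∑ i, ∑ j, a i j * ∑ ε : ι → Bool, u' i ε * v' j ε
        = (8 / (Real.sqrt 3 * N)) * T2 := by
      rw [hT2, Finset.mul_sum]
      refine Finset.sum_congr rfl fun i _ => ?_
      rw [Finset.mul_sum]
      refine Finset.sum_congr rfl fun j _ => ?_
      rw [hinner i j, hd]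
      ring
    rw [hre] at happ
    rw [abs_mul, abs_of_pos (by positivity : (0:ℝ) < 8 / (Real.sqrt 3 * N))] at happ
    rw [div_mul_eq_mul_div, div_le_iff₀ (by positivity)] at happ
    -- happ : 8 * |T2| ≤ C * gsup n a * (√3 * N)
    have hfin : C * gsup n a * (Real.sqrt 3 * N) ≤ C * gsup n a * (2 * N) :=
      mul_le_mul_of_nonneg_left
        (mul_le_mul_of_nonneg_right h3le hNpos.le)
        (mul_nonneg hC (gsup_nonneg n a))
    have : 8 * |T2| ≤ C * gsup n a * (2 * N) := le_trans happ hfin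
    nlinarith [this]
  -- bound on T3 via the inductive hypothesis
  have hT3bound : |T3| ≤ N * (C * gsup n a) / 4 := by
    set c : ℝ := 8 / (Real.sqrt 3 * Real.sqrt N) with hc
    have hcpos : 0 < c := by positivity
    have hc2 : c ^ 2 = 64 / (3 * N) := by
      rw [hc, div_pow, mul_pow, h3, hsN]
      norm_num
    set u' : Fin n → (ι → Bool) → ℝ := fun i ε => tr (F i ε) / Real.sqrt N with hu'
    set v' : Fin n → (ι → Bool) → ℝ := fun j ε => (G j ε - tr (G j ε)) * c with hv'
    have hu'1 : ∀ i, ∑ ε : ι → Bool, (u' i ε) ^ 2 ≤ 1 := by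
      intro i
      rw [hu']
      simp only [div_pow]
      rw [← Finset.sum_div, hsN]
      rw [div_le_one hNpos]
      simpa using hTrF2 i
    have hv'1 : ∀ j, ∑ ε : ι → Bool, (v' j ε) ^ 2 ≤ 1 := by
      intro j
      rw [hv']
      simp only [mul_pow]
      rw [← Finset.sum_mul, hc2]
      calc (∑ ε : ι → Bool, (G j ε - tr (G j ε)) ^ 2) * (64 / (3 * N))
          ≤ (3 * N / 64) * (64 / (3 * N)) :=
            mul_le_mul_of_nonneg_right (hPsiG2 j) (by positivity)
        _ = 1 := by field_simp
    have happ := h (ι → Bool) a u' v' hu'1 hv'1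
    have hinner : ∀ i j, ∑ ε : ι → Bool, u' i ε * v' j ε
        = (c / Real.sqrt N) * ∑ ε : ι → Bool, tr (F i ε) * (G j ε - tr (G j ε)) := by
      intro i j
      rw [hu', hv', Finset.mul_sum]
      refine Finset.sum_congr rfl fun ε _ => ?_
      field_simp
    have hd : c / Real.sqrt N = 8 / (Real.sqrt 3 * N) := by
      rw [hc, div_div, mul_assoc, Real.mul_self_sqrt hNpos.le]
    have hre : ∑ i, ∑ j, a i j * ∑ ε : ι → Bool, u' i ε * v' j ε
        = (8 / (Real.sqrt 3 * N)) * T3 := by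
      rw [hT3, Finset.mul_sum]
      refine Finset.sum_congr rfl fun i _ => ?_
      rw [Finset.mul_sum]
      refine Finset.sum_congr rfl fun j _ => ?_
      rw [hinner i j, hd]
      ring
    rw [hre] at happ
    rw [abs_mul, abs_of_pos (by positivity : (0:ℝ) < 8 / (Real.sqrt 3 * N))] at happ
    rw [div_mul_eq_mul_div, div_le_iff₀ (by positivity)] at happ
    have hfin : C * gsup n a * (Real.sqrt 3 * N) ≤ C * gsup n a * (2 * N) :=
      mul_le_mul_of_nonneg_left
        (mul_le_mul_of_nonneg_right h3le hNpos.le)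
        (mul_nonneg hC (gsup_nonneg n a))
    have : 8 * |T3| ≤ C * gsup n a * (2 * N) := le_trans happ hfin
    nlinarith [this]
  -- put the three bounds together
  rw [hsplit, abs_div, abs_of_pos hNpos, div_le_iff₀ hNpos]
  have htri : |T1 + T2 + T3| ≤ |T1| + |T2| + |T3| := by
    calc |T1 + T2 + T3| ≤ |T1 + T2| + |T3| := abs_add_le _ _
      _ ≤ |T1| + |T2| + |T3| := by linarith [abs_add_le T1 T2]
  have : |T1| + |T2| + |T3| ≤ 64 * N * gsup n a + N * (C * gsup n a) / 4
      + N * (C * gsup n a) / 4 := by linarith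
  refine htri.trans (this.trans ?_)
  have hg := gsup_nonneg n a
  nlinarith [mul_nonneg hNpos.le (mul_nonneg hC hg)]

lemma gipn_iter (n : ℕ) (k : ℕ) : GIPn n (128 + (n : ℝ) ^ 2 / 2 ^ k) := by
  induction k with
  | zero =>
    refine gipn_mono (gipn_init n) ?_
    simp
  | succ k ih =>
    have hC : (0:ℝ) ≤ 128 + (n : ℝ) ^ 2 / 2 ^ k := by positivity
    have hb := gipn_boot hC ih
    have heq : 64 + (128 + (n : ℝ) ^ 2 / 2 ^ k) / 2 = 128 + (n : ℝ) ^ 2 / 2 ^ (k + 1) := by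
      rw [pow_succ]
      ring
    exact heq ▸ hb

lemma gipn_final (n : ℕ) : GIPn n 129 := by
  refine gipn_mono (gipn_iter n (n ^ 2)) ?_
  have h1 : (n : ℝ) ^ 2 / 2 ^ (n ^ 2) ≤ 1 := by
    rw [div_le_one (by positivity)]
    have := (Nat.lt_two_pow_self (n := n ^ 2)).le
    exact_mod_cast this
  linarith

end GIaux

/-- **Grothendieck's Inequality** (Lindenstrauss–Pełczyński version). There is a universal
constant `K > 0` such that for every real Hilbert space `H`, every `n`, every `n × n` real
matrix `a` and all vectors `x i`, `y j` in the closed unit ball of `H`,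
`|∑ a i j ⟪x i, y j⟫| ≤ K * sup { |∑ a i j * s i * t j| : |s i| ≤ 1, |t j| ≤ 1 }`. -/
theorem grothendieck_inequality :
    ∃ K : ℝ, 0 < K ∧
      ∀ (H : Type) [NormedAddCommGroup H] [InnerProductSpace ℝ H] [CompleteSpace H]
        (n : ℕ) (a : Fin n → Fin n → ℝ) (x y : Fin n → H),
        (∀ i, ‖x i‖ ≤ 1) → (∀ j, ‖y j‖ ≤ 1) →
        |∑ i, ∑ j, a i j * ⟪x i, y j⟫| ≤
          K * sSup {r : ℝ | ∃ s t : Fin n → ℝ, (∀ i, |s i| ≤ 1) ∧ (∀ j, |t j| ≤ 1) ∧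
            r = |∑ i, ∑ j, a i j * s i * t j|} := by
  classical
  refine ⟨129, by norm_num, ?_⟩
  intro H _ _ _ n a x y hx hy
  set V : Submodule ℝ H := Submodule.span ℝ (Set.range x ∪ Set.range y) with hV
  haveI : FiniteDimensional ℝ V :=
    FiniteDimensional.span_of_finite ℝ ((Set.finite_range x).union (Set.finite_range y))
  set b := stdOrthonormalBasis ℝ V with hb
  have hxV : ∀ i, x i ∈ V := fun i => Submodule.subset_span (Or.inl (Set.mem_range_self i))
  have hyV : ∀ j, y j ∈ V := fun j => Submodule.subset_span (Or.inr (Set.mem_range_self j))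
  set xV : Fin n → V := fun i => ⟨x i, hxV i⟩ with hxVdef
  set yV : Fin n → V := fun j => ⟨y j, hyV j⟩ with hyVdef
  set u : Fin n → Fin (Module.finrank ℝ V) → ℝ := fun i k => ⟪xV i, b k⟫ with hudef
  set v : Fin n → Fin (Module.finrank ℝ V) → ℝ := fun j k => ⟪b k, yV j⟫ with hvdef
  have hip : ∀ i j, ∑ k, u i k * v j k = ⟪x i, y j⟫ := by
    intro i j
    rw [hudef, hvdef]
    simp only []
    rw [b.sum_inner_mul_inner (xV i) (yV j)]
    rw [Submodule.coe_inner]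
  have hnormx : ∀ i, ‖xV i‖ ≤ 1 := by
    intro i
    rw [hxVdef]
    simpa [Submodule.coe_norm] using hx i
  have hnormy : ∀ j, ‖yV j‖ ≤ 1 := by
    intro j
    rw [hyVdef]
    simpa [Submodule.coe_norm] using hy j
  have hu : ∀ i, ∑ k, (u i k) ^ 2 ≤ 1 := by
    intro i
    have he : ∑ k, (u i k) ^ 2 = ⟪xV i, xV i⟫ := by
      rw [← b.sum_inner_mul_inner (xV i) (xV i)]
      refine Finset.sum_congr rfl fun k _ => ?_
      rw [hudef]
      simp only []
      rw [sq, real_inner_comm (b k) (xV i)]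
    rw [he, real_inner_self_eq_norm_sq]
    have := hnormx i
    nlinarith [norm_nonneg (xV i)]
  have hv : ∀ j, ∑ k, (v j k) ^ 2 ≤ 1 := by
    intro j
    have he : ∑ k, (v j k) ^ 2 = ⟪yV j, yV j⟫ := by
      rw [← b.sum_inner_mul_inner (yV j) (yV j)]
      refine Finset.sum_congr rfl fun k _ => ?_
      rw [hvdef]
      simp only []
      rw [sq, real_inner_comm (b k) (yV j)]
    rw [he, real_inner_self_eq_norm_sq]
    have := hnormy j
    nlinarith [norm_nonneg (yV j)]
  have hmain := GIaux.gipn_final n (Fin (Module.finrank ℝ V)) a u v hu hv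
  have hrw : ∑ i, ∑ j, a i j * ∑ k, u i k * v j k = ∑ i, ∑ j, a i j * ⟪x i, y j⟫ :=
    Finset.sum_congr rfl fun i _ => Finset.sum_congr rfl fun j _ => by rw [hip i j]
  rw [hrw] at hmain
  exact hmain
end
end

section
/- Let E and F be Banach spaces, p ≥ 1, and T : E → F a continuous linear operator. Then T is absolutely p-summing if and only if there exist a constant C ≥ 0 and a Borel probability measure μ on the closed unit ball B_{E*} of the dual of E, endowed with the weak-star topology, such that ‖T(x)‖ ≤ C (∫_{B_{E*}} |φ(x)|^p dμ(φ))^{1/p} for every x ∈ E. (Pietsch Domination Theorem.) -/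
open scoped BigOperators
open MeasureTheory

/-- The weak ℓ_p norm of a finite family `x` in a normed space `E`. -/
noncomputable def weakNorm (𝕜 : Type*) [RCLike 𝕜] {E : Type*} [NormedAddCommGroup E]
    [NormedSpace 𝕜 E] (p : ℝ) {m : ℕ} (x : Fin m → E) : ℝ :=
  ⨆ φ : {φ : E →L[𝕜] 𝕜 // ‖φ‖ ≤ 1}, (∑ j, ‖φ.1 (x j)‖ ^ p) ^ (1 / p)

/-- A continuous linear operator `u : E → F` is absolutely `p`-summing. -/
def AbsolutelySumming (𝕜 : Type*) [RCLike 𝕜] {E F : Type*} [NormedAddCommGroup E]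
    [NormedSpace 𝕜 E] [NormedAddCommGroup F] [NormedSpace 𝕜 F] (p : ℝ)
    (u : E →L[𝕜] F) : Prop :=
  ∃ C : ℝ, 0 ≤ C ∧ ∀ (m : ℕ) (x : Fin m → E),
    (∑ j, ‖u (x j)‖ ^ p) ^ (1 / p) ≤ C * weakNorm 𝕜 p x

/-- The closed unit ball of the dual of `E`, with the weak-star topology. -/
def dualBall (𝕜 : Type*) [RCLike 𝕜] (E : Type*) [NormedAddCommGroup E]
    [NormedSpace 𝕜 E] : Set (WeakDual 𝕜 E) :=
  {φ : WeakDual 𝕜 E | ‖(WeakDual.toStrongDual φ : E →L[𝕜] 𝕜)‖ ≤ 1}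

/-- The Borel σ-algebra on the weak-star dual. -/
noncomputable instance (𝕜 E : Type*) [RCLike 𝕜] [NormedAddCommGroup E] [NormedSpace 𝕜 E] :
    MeasurableSpace (WeakDual 𝕜 E) := borel _

section AuxRMK
open Set

namespace PietschAux

variable {X : Type*} [TopologicalSpace X] [CompactSpace X] [T2Space X]

/-- The test functions for the Riesz content of a set `K`. -/
def VS (K : Set X) : Set C(X, ℝ) := {h | (∀ x, 0 ≤ h x) ∧ ∀ x ∈ K, 1 ≤ h x}

variable (Λ : C(X, ℝ) →ₗ[ℝ] ℝ)

/-- The Riesz content of a set. -/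
noncomputable def cF (K : Set X) : ℝ := sInf (Λ '' VS K)

lemma one_mem_VS (K : Set X) : (1 : C(X, ℝ)) ∈ VS K :=
  ⟨fun _ => zero_le_one, fun _ _ => le_refl _⟩

lemma VS_image_nonempty (K : Set X) : (Λ '' VS K).Nonempty :=
  ⟨Λ 1, 1, one_mem_VS K, rfl⟩

variable (hpos : ∀ f : C(X, ℝ), (∀ x, 0 ≤ f x) → 0 ≤ Λ f)

include hpos

lemma Λmono {f g : C(X, ℝ)} (h : ∀ x, f x ≤ g x) : Λ f ≤ Λ g := by
  have := hpos (g - f) fun x => by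
    simpa [ContinuousMap.sub_apply, sub_nonneg] using h x
  rw [map_sub] at this; linarith

lemma VS_image_bddBelow (K : Set X) : BddBelow (Λ '' VS K) := by
  refine ⟨0, fun y hy => ?_⟩
  obtain ⟨h, hh, rfl⟩ := hy
  exact hpos h hh.1

lemma cF_nonneg (K : Set X) : 0 ≤ cF Λ K :=
  le_csInf (VS_image_nonempty Λ K) (fun y hy => by
    obtain ⟨h, hh, rfl⟩ := hy; exact hpos h hh.1)

lemma cF_le {K : Set X} {h : C(X, ℝ)} (hh : h ∈ VS K) : cF Λ K ≤ Λ h :=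
  csInf_le (VS_image_bddBelow Λ hpos K) ⟨h, hh, rfl⟩

omit hpos in
lemma le_cF {K : Set X} {c : ℝ} (hc : ∀ h ∈ VS K, c ≤ Λ h) : c ≤ cF Λ K :=
  le_csInf (VS_image_nonempty Λ K) (fun y hy => by
    obtain ⟨h, hh, rfl⟩ := hy; exact hc h hh)

lemma cF_mono {K₁ K₂ : Set X} (h : K₁ ⊆ K₂) : cF Λ K₁ ≤ cF Λ K₂ :=
  csInf_le_csInf (VS_image_bddBelow Λ hpos K₁) (VS_image_nonempty Λ K₂)
    (image_mono fun f hf => ⟨hf.1, fun x hx => hf.2 x (h hx)⟩)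

lemma cF_union_le (K₁ K₂ : Set X) : cF Λ (K₁ ∪ K₂) ≤ cF Λ K₁ + cF Λ K₂ := by
  refine le_of_forall_pos_le_add fun ε hε => ?_
  obtain ⟨y₁, ⟨h₁, hh₁, rfl⟩, hy₁⟩ := exists_lt_of_csInf_lt (VS_image_nonempty Λ K₁)
    (show cF Λ K₁ < cF Λ K₁ + ε / 2 by linarith)
  obtain ⟨y₂, ⟨h₂, hh₂, rfl⟩, hy₂⟩ := exists_lt_of_csInf_lt (VS_image_nonempty Λ K₂)
    (show cF Λ K₂ < cF Λ K₂ + ε / 2 by linarith)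
  have hmem : h₁ + h₂ ∈ VS (K₁ ∪ K₂) := by
    refine ⟨fun x => add_nonneg (hh₁.1 x) (hh₂.1 x), fun x hx => ?_⟩
    simp only [ContinuousMap.add_apply]
    rcases hx with hx | hx
    · have := hh₁.2 x hx; have := hh₂.1 x; linarith
    · have := hh₂.2 x hx; have := hh₁.1 x; linarith
  calc cF Λ (K₁ ∪ K₂) ≤ Λ (h₁ + h₂) := cF_le Λ hpos hmem
    _ = Λ h₁ + Λ h₂ := map_add Λ h₁ h₂
    _ ≤ cF Λ K₁ + cF Λ K₂ + ε := by linarith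

lemma cF_union_disjoint {K₁ K₂ : Set X} (hK₁ : IsCompact K₁) (hK₂ : IsCompact K₂)
    (hd : Disjoint K₁ K₂) : cF Λ K₁ + cF Λ K₂ ≤ cF Λ (K₁ ∪ K₂) := by
  obtain ⟨g, hg0, hg1, hg01⟩ := exists_continuous_zero_one_of_isCompact hK₂ hK₁.isClosed hd.symm
  -- g = 0 on K₂, g = 1 on K₁
  refine le_cF Λ fun h hh => ?_
  have h1 : h * g ∈ VS K₁ := by
    refine ⟨fun x => mul_nonneg (hh.1 x) (hg01 x).1, fun x hx => ?_⟩
    have := hh.2 x (Or.inl hx)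
    simp only [ContinuousMap.mul_apply]
    rw [hg1 hx]
    simpa using this
  have h2 : h * (1 - g) ∈ VS K₂ := by
    refine ⟨fun x => mul_nonneg (hh.1 x) (by simpa using (hg01 x).2), fun x hx => ?_⟩
    have := hh.2 x (Or.inr hx)
    simp only [ContinuousMap.mul_apply, ContinuousMap.sub_apply, ContinuousMap.one_apply]
    rw [hg0 hx]
    simpa using this
  have : Λ (h * g) + Λ (h * (1 - g)) = Λ h := by
    rw [← map_add]
    congr 1
    ring
  calc cF Λ K₁ + cF Λ K₂ ≤ Λ (h * g) + Λ (h * (1 - g)) :=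
        add_le_add (cF_le Λ hpos h1) (cF_le Λ hpos h2)
    _ = Λ h := this

/-- The Riesz content as a mathlib `Content`. -/
noncomputable def cont : Content X where
  toFun K := (cF Λ K).toNNReal
  mono' K₁ K₂ h := Real.toNNReal_mono (cF_mono Λ hpos h)
  sup_disjoint' K₁ K₂ hd _ _ := by
    have hle := cF_union_le Λ hpos (K₁ : Set X) K₂
    have hge := cF_union_disjoint Λ hpos K₁.2 K₂.2 hd
    have : cF Λ ((K₁ : Set X) ∪ K₂) = cF Λ K₁ + cF Λ K₂ := le_antisymm hle hge
    simp only [TopologicalSpace.Compacts.coe_sup]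
    rw [this, Real.toNNReal_add (cF_nonneg Λ hpos _) (cF_nonneg Λ hpos _)]
  sup_le' K₁ K₂ := by
    have hle := cF_union_le Λ hpos (K₁ : Set X) K₂
    simp only [TopologicalSpace.Compacts.coe_sup]
    calc (cF Λ ((K₁ : Set X) ∪ K₂)).toNNReal
        ≤ (cF Λ K₁ + cF Λ K₂).toNNReal := Real.toNNReal_mono hle
      _ ≤ _ := by
          rw [Real.toNNReal_add (cF_nonneg Λ hpos _) (cF_nonneg Λ hpos _)]

open scoped ENNReal Topology
open Filter TopologicalSpace

set_option linter.unusedSectionVars false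

section Measure

variable [MeasurableSpace X] [BorelSpace X]

/-- The Riesz measure of a positive normalized functional is a probability measure dominating it
on nonnegative functions. -/
theorem exists_dominating_prob_measure (hone : Λ 1 = 1) :
    ∃ μ : Measure X, IsProbabilityMeasure μ ∧
      ∀ f : C(X, ℝ), (∀ x, 0 ≤ f x) → Λ f ≤ ∫ x, f x ∂μ := by
  classical
  -- the measure
  set μ : Measure X := (cont Λ hpos).measure with hμdef
  -- total mass one
  have hcFuniv : cF Λ (univ : Set X) = 1 := by
    refine le_antisymm ?_ (le_cF Λ fun h hh => ?_)
    · simpa [hone] using cF_le Λ hpos (one_mem_VS (univ : Set X))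
    · have := Λmono Λ hpos (f := 1) (g := h) fun x => by
        simpa using hh.2 x (mem_univ x)
      simpa [hone] using this
  have htop : (cont Λ hpos) ⊤ = 1 := by
    have h0 : (cont Λ hpos).toFun ⊤ = 1 := by
      show (cF Λ ((⊤ : TopologicalSpace.Compacts X) : Set X)).toNNReal = 1
      rw [show ((⊤ : TopologicalSpace.Compacts X) : Set X) = univ from rfl, hcFuniv]
      simp
    rw [show (cont Λ hpos) ⊤ = ((cont Λ hpos).toFun ⊤ : ENNReal) from rfl, h0]
    simp
  have hμuniv : μ univ = 1 := by
    have h1 : μ univ = (cont Λ hpos).outerMeasure univ :=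
      Content.measure_apply _ MeasurableSet.univ
    have h2 : (cont Λ hpos).outerMeasure univ
        = (cont Λ hpos).innerContent ⟨univ, isOpen_univ⟩ :=
      Content.outerMeasure_of_isOpen _ _ isOpen_univ
    have h3 : (cont Λ hpos).innerContent ⟨univ, isOpen_univ⟩ = 1 := by
      apply le_antisymm
      · exact le_trans ((cont Λ hpos).innerContent_le ⟨univ, isOpen_univ⟩ ⊤ (by simp))
          (le_of_eq htop)
      · exact le_trans (le_of_eq htop.symm)
          ((cont Λ hpos).le_innerContent ⊤ ⟨univ, isOpen_univ⟩ (subset_univ _))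
    rw [h1, h2, h3]
  have hprob : IsProbabilityMeasure μ := ⟨hμuniv⟩
  refine ⟨μ, hprob, fun f hf => ?_⟩
  by_cases hM0 : ‖f‖ = 0
  · have hf0 : f = 0 := norm_eq_zero.mp hM0
    simp [hf0, map_zero]
  have hM : 0 < ‖f‖ := lt_of_le_of_ne (norm_nonneg f) (Ne.symm hM0)
  set M := ‖f‖ with hMdef
  -- survival function
  set G : ℝ → ℝ := fun t => (μ {x | t ≤ f x}).toReal with hGdef
  have hGanti : Antitone G := by
    intro t t' htt'
    exact ENNReal.toReal_mono (measure_ne_top μ _)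
      (measure_mono fun x hx => le_trans htt' hx)
  have hGnonneg : ∀ t, 0 ≤ G t := fun t => ENNReal.toReal_nonneg
  -- truncation function
  set gg : ℝ → ℝ := fun t => Λ (f ⊓ ContinuousMap.const X t) with hggdef
  have hggM : gg M = Λ f := by
    have hfM : f ⊓ ContinuousMap.const X M = f := by
      ext x
      exact min_eq_left ((Real.le_norm_self _).trans (f.norm_coe_le_norm x))
    show Λ (f ⊓ ContinuousMap.const X M) = Λ f
    rw [hfM]
  have hgg0 : gg 0 = 0 := by
    have hf0 : f ⊓ ContinuousMap.const X (0 : ℝ) = 0 := by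
      ext x
      exact min_eq_right (hf x)
    show Λ (f ⊓ ContinuousMap.const X (0 : ℝ)) = 0
    rw [hf0, map_zero]
  -- increment estimate
  have hinc : ∀ t : ℝ, 0 ≤ t → ∀ s : ℝ, 0 < s → gg (t + s) - gg t ≤ s * G t := by
    intro t ht s hs
    set K : Set X := {x | t ≤ f x} with hKdef
    have hKcl : IsClosed K := isClosed_le continuous_const f.continuous
    have hKc : IsCompact K := hKcl.isCompact
    have key : ∀ h ∈ VS K, gg (t + s) - gg t ≤ s * Λ h := by
      intro h hh
      have hpt : ∀ x, (f ⊓ ContinuousMap.const X (t + s)) x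
          ≤ ((f ⊓ ContinuousMap.const X t) + s • h) x := by
        intro x
        simp only [ContinuousMap.inf_apply, ContinuousMap.const_apply,
          ContinuousMap.add_apply, ContinuousMap.smul_apply, smul_eq_mul]
        rcases le_total (f x) t with hx | hx
        · rw [min_eq_left hx, min_eq_left (by linarith)]
          nlinarith [hh.1 x]
        · have hx1 : (1 : ℝ) ≤ h x := hh.2 x hx
          have h1 : min (f x) (t + s) ≤ t + s := min_le_right _ _
          have h2 : min (f x) t = t := min_eq_right hx
          nlinarith
      have hΛ := Λmono Λ hpos hpt
      rw [map_add] at hΛ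
      have hsm : Λ (s • h) = s * Λ h := by rw [Λ.map_smul, smul_eq_mul]
      rw [hsm] at hΛ
      show Λ (f ⊓ ContinuousMap.const X (t + s)) - Λ (f ⊓ ContinuousMap.const X t) ≤ s * Λ h
      linarith
    have hdiv : (gg (t + s) - gg t) / s ≤ cF Λ K :=
      le_cF Λ fun h hh => (div_le_iff₀ hs).mpr (by rw [mul_comm]; exact key h hh)
    have hKle : cF Λ K ≤ G t := by
      have hμK : μ K = (cont Λ hpos).outerMeasure K :=
        Content.measure_apply _ hKcl.measurableSet
      have hle' : ENNReal.ofReal (cF Λ K) ≤ μ K := by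
        rw [hμK]
        exact Content.le_outerMeasure_compacts _ ⟨K, hKc⟩
      have := (ENNReal.ofReal_le_iff_le_toReal (measure_ne_top μ K)).mp hle'
      exact this
    calc gg (t + s) - gg t = s * ((gg (t + s) - gg t) / s) := by field_simp
      _ ≤ s * G t := mul_le_mul_of_nonneg_left (hdiv.trans hKle) hs.le
  -- telescoping and Riemann sum comparison
  have htel : ∀ n : ℕ, 0 < n → Λ f ≤ M / n * G 0 + ∫ t in (0:ℝ)..M, G t := by
    intro n hn
    have hn' : (0:ℝ) < n := Nat.cast_pos.mpr hn
    set s : ℝ := M / n with hsdef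
    have hs : 0 < s := div_pos hM hn'
    have tele : Λ f = ∑ i ∈ Finset.range n, (gg ((i + 1 : ℕ) * s) - gg (i * s)) := by
      rw [Finset.sum_range_sub (fun i : ℕ => gg (i * s))]
      have h1 : (n : ℝ) * s = M := by rw [hsdef]; field_simp
      have h2 : ((0 : ℕ) : ℝ) * s = 0 := by simp
      rw [h1, h2, hgg0, hggM, sub_zero]
    have hbound : ∀ i ∈ Finset.range n,
        gg ((i + 1 : ℕ) * s) - gg (i * s) ≤ s * G (i * s) := by
      intro i _
      have h := hinc (i * s) (by positivity) s hs
      have harg : ((i + 1 : ℕ) : ℝ) * s = i * s + s := by push_cast; ring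
      rw [harg]
      exact h
    have hsum1 : Λ f ≤ ∑ i ∈ Finset.range n, s * G (i * s) :=
      tele ▸ Finset.sum_le_sum hbound
    -- compare with the integral
    have hHanti : ∀ a b : ℝ, 0 ≤ a → a ≤ b → G (s * b) ≤ G (s * a) := fun a b _ hab =>
      hGanti (mul_le_mul_of_nonneg_left hab hs.le)
    have hHanti' : AntitoneOn (fun u : ℝ => G (s * u)) (Icc (0:ℝ) ((0:ℝ) + (n - 1 : ℕ))) :=
      fun a ha b hb hab => hHanti a b ha.1 hab
    have hriem : ∑ i ∈ Finset.range (n - 1), G (s * ((0:ℝ) + ((i : ℕ) + 1 : ℕ)))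
        ≤ ∫ u in (0:ℝ)..((0:ℝ) + (n - 1 : ℕ)), G (s * u) :=
      hHanti'.sum_le_integral
    have hint0 : ∀ a b : ℝ, 0 ≤ a → a ≤ b →
        IntervalIntegrable (fun u : ℝ => G (s * u)) volume a b := by
      intro a b ha hab
      refine AntitoneOn.intervalIntegrable ?_
      rw [uIcc_of_le hab]
      exact fun u hu v hv huv => hHanti u v (ha.trans hu.1) huv
    have hsplit : ∫ u in (0:ℝ)..((n - 1 : ℕ) : ℝ), G (s * u)
        ≤ ∫ u in (0:ℝ)..(n : ℝ), G (s * u) := by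
      have hle1 : ((n - 1 : ℕ) : ℝ) ≤ (n : ℝ) := by
        exact_mod_cast Nat.sub_le n 1
      have h1 := hint0 0 ((n - 1 : ℕ) : ℝ) le_rfl (by positivity)
      have h2 := hint0 ((n - 1 : ℕ) : ℝ) (n : ℝ) (by positivity) hle1
      rw [← intervalIntegral.integral_add_adjacent_intervals h1 h2]
      have : 0 ≤ ∫ u in ((n - 1 : ℕ) : ℝ)..(n : ℝ), G (s * u) :=
        intervalIntegral.integral_nonneg hle1 (fun u _ => hGnonneg _)
      linarith
    have hsubst : ∫ u in (0:ℝ)..(n : ℝ), G (s * u) = s⁻¹ * ∫ t in (0:ℝ)..M, G t := by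
      rw [intervalIntegral.integral_comp_mul_left (fun t => G t) hs.ne']
      have h1 : s * (0:ℝ) = 0 := by ring
      have h2 : s * (n:ℝ) = M := by
        rw [hsdef]; field_simp
      rw [h1, h2, smul_eq_mul]
    -- put the sum bound together
    have hsum2 : ∑ i ∈ Finset.range n, G (i * s)
        ≤ G 0 + ∫ u in (0:ℝ)..(n : ℝ), G (s * u) := by
      obtain ⟨m, rfl⟩ : ∃ m, n = m + 1 := ⟨n - 1, (Nat.succ_pred_eq_of_pos hn).symm⟩
      rw [Finset.sum_range_succ']
      have hm : (m + 1 : ℕ) - 1 = m := rfl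
      rw [hm] at hriem hsplit
      have heq : ∀ i : ℕ, ((i + 1 : ℕ) : ℝ) * s = s * ((0:ℝ) + ((i : ℕ) + 1 : ℕ)) := by
        intro i; push_cast; ring
      have hsum3 : ∑ i ∈ Finset.range m, G (((i + 1 : ℕ) : ℝ) * s)
          ≤ ∫ u in (0:ℝ)..((0:ℝ) + (m : ℕ)), G (s * u) := by
        refine le_trans (le_of_eq ?_) hriem
        refine Finset.sum_congr rfl fun i _ => ?_
        rw [heq i]
      have hz : ((0 : ℕ) : ℝ) * s = 0 := by simp
      rw [hz]
      have : ∫ u in (0:ℝ)..((0:ℝ) + (m : ℕ)), G (s * u)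
          ≤ ∫ u in (0:ℝ)..((m + 1 : ℕ) : ℝ), G (s * u) := by
        rw [zero_add]
        push_cast at hsplit ⊢
        exact hsplit
      have := hsum3.trans this
      push_cast at this ⊢
      linarith
    calc Λ f ≤ ∑ i ∈ Finset.range n, s * G (i * s) := hsum1
      _ = s * ∑ i ∈ Finset.range n, G (i * s) := by rw [Finset.mul_sum]
      _ ≤ s * (G 0 + ∫ u in (0:ℝ)..(n : ℝ), G (s * u)) :=
          mul_le_mul_of_nonneg_left hsum2 hs.le
      _ = s * G 0 + s * (s⁻¹ * ∫ t in (0:ℝ)..M, G t) := by rw [hsubst]; ring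
      _ = M / n * G 0 + ∫ t in (0:ℝ)..M, G t := by
          rw [← hsdef]; field_simp
  -- pass to the limit
  have hlim : Tendsto (fun n : ℕ => M / n * G 0 + ∫ t in (0:ℝ)..M, G t) atTop
      (𝓝 ((0:ℝ) * G 0 + ∫ t in (0:ℝ)..M, G t)) :=
    ((tendsto_const_div_atTop_nhds_zero_nat M).mul_const (G 0)).add_const _
  have hΛle : Λ f ≤ ∫ t in (0:ℝ)..M, G t := by
    have := ge_of_tendsto hlim (eventually_atTop.mpr ⟨1, fun n hn => htel n hn⟩)
    simpa using this
  -- layer cake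
  have hfae : (0 : X → ℝ) ≤ᵐ[μ] fun x => f x := Filter.Eventually.of_forall hf
  have hfmble : AEMeasurable (fun x => f x) μ := f.continuous.measurable.aemeasurable
  have hlc : ∫⁻ x, ENNReal.ofReal (f x) ∂μ = ∫⁻ t in Ioi (0:ℝ), μ {x | t ≤ f x} :=
    lintegral_eq_lintegral_meas_le μ hfae hfmble
  have hfin : ∫⁻ x, ENNReal.ofReal (f x) ∂μ ≠ ∞ := by
    have hb : ∀ x, ENNReal.ofReal (f x) ≤ ENNReal.ofReal M :=
      fun x => ENNReal.ofReal_le_ofReal ((Real.le_norm_self _).trans (f.norm_coe_le_norm x))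
    have := lintegral_mono (μ := μ) hb
    rw [lintegral_const, hμuniv, mul_one] at this
    exact ne_top_of_le_ne_top ENNReal.ofReal_ne_top this
  have hmeasG : Measurable fun t : ℝ => μ {x | t ≤ f x} := by
    apply Antitone.measurable
    intro t t' htt'
    exact measure_mono fun x hx => le_trans htt' hx
  have hGint : ∫ t in (0:ℝ)..M, G t = (∫⁻ t in Ioc (0:ℝ) M, μ {x | t ≤ f x}).toReal := by
    rw [intervalIntegral.integral_of_le hM.le]
    exact integral_toReal (hmeasG.aemeasurable.restrict)
      (Filter.Eventually.of_forall fun t => measure_lt_top μ _)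
  have hmono2 : (∫⁻ t in Ioc (0:ℝ) M, μ {x | t ≤ f x})
      ≤ ∫⁻ t in Ioi (0:ℝ), μ {x | t ≤ f x} :=
    lintegral_mono_set Ioc_subset_Ioi_self
  have hIfin : (∫⁻ t in Ioi (0:ℝ), μ {x | t ≤ f x}) ≠ ∞ := by rw [← hlc]; exact hfin
  have hint_eq : ∫ x, f x ∂μ = (∫⁻ x, ENNReal.ofReal (f x) ∂μ).toReal :=
    integral_eq_lintegral_of_nonneg_ae hfae f.continuous.aestronglyMeasurable
  calc Λ f ≤ ∫ t in (0:ℝ)..M, G t := hΛle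
    _ = (∫⁻ t in Ioc (0:ℝ) M, μ {x | t ≤ f x}).toReal := hGint
    _ ≤ (∫⁻ t in Ioi (0:ℝ), μ {x | t ≤ f x}).toReal := ENNReal.toReal_mono hIfin hmono2
    _ = (∫⁻ x, ENNReal.ofReal (f x) ∂μ).toReal := by rw [hlc]
    _ = ∫ x, f x ∂μ := hint_eq.symm

end Measure

end PietschAux

end AuxRMK

section Glue

open Set Filter Topology PietschAux

variable {𝕜 : Type*} [RCLike 𝕜] {E : Type*} [NormedAddCommGroup E] [NormedSpace 𝕜 E]

instance (𝕜 E : Type*) [RCLike 𝕜] [NormedAddCommGroup E] [NormedSpace 𝕜 E] :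
    BorelSpace (WeakDual 𝕜 E) := ⟨rfl⟩

lemma isCompact_dualBall : IsCompact (dualBall 𝕜 E) := by
  have h := WeakDual.isCompact_closedBall (𝕜 := 𝕜) (E := E) 0 1
  have : dualBall 𝕜 E = WeakDual.toStrongDual ⁻¹' Metric.closedBall 0 1 := by
    ext φ
    simp [dualBall, Metric.mem_closedBall, dist_zero_right]
  rw [this]
  exact h

instance : CompactSpace (dualBall 𝕜 E) :=
  isCompact_iff_compactSpace.mp isCompact_dualBall

instance : Nonempty {φ : E →L[𝕜] 𝕜 // ‖φ‖ ≤ 1} := ⟨⟨0, by simp⟩⟩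

lemma zero_mem_dualBall : (0 : WeakDual 𝕜 E) ∈ dualBall 𝕜 E := by
  show ‖_‖ ≤ 1
  simp

instance : Nonempty (dualBall 𝕜 E) := ⟨⟨0, zero_mem_dualBall⟩⟩

/-- Evaluation of the `p`-th power of a functional, as a continuous map on the dual ball. -/
noncomputable def evCM (p : ℝ) (hp : 1 ≤ p) (x : E) : C((dualBall 𝕜 E : Set (WeakDual 𝕜 E)), ℝ) :=
  ⟨fun φ => ‖(φ : WeakDual 𝕜 E) x‖ ^ p, by
    refine Continuous.rpow_const ?_ fun φ => Or.inr (by linarith)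
    exact ((WeakDual.eval_continuous x).comp continuous_subtype_val).norm⟩

lemma evCM_apply (p : ℝ) (hp : 1 ≤ p) (x : E) (φ : (dualBall 𝕜 E : Set (WeakDual 𝕜 E))) :
    evCM p hp x φ = ‖(φ : WeakDual 𝕜 E) x‖ ^ p := rfl

lemma evCM_nonneg (p : ℝ) (hp : 1 ≤ p) (x : E) (φ : (dualBall 𝕜 E : Set (WeakDual 𝕜 E))) :
    0 ≤ evCM p hp x φ := Real.rpow_nonneg (norm_nonneg _) _

/-- Norm bound for elements of the dual ball. -/
lemma dualBall_apply_le (φ : (dualBall 𝕜 E : Set (WeakDual 𝕜 E))) (x : E) :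
    ‖(φ : WeakDual 𝕜 E) x‖ ≤ ‖x‖ := by
  have h2 : ‖WeakDual.toStrongDual (φ : WeakDual 𝕜 E)‖ ≤ 1 := φ.2
  calc ‖(φ : WeakDual 𝕜 E) x‖ = ‖WeakDual.toStrongDual (φ : WeakDual 𝕜 E) x‖ := rfl
    _ ≤ ‖WeakDual.toStrongDual (φ : WeakDual 𝕜 E)‖ * ‖x‖ :=
        ContinuousLinearMap.le_opNorm _ _
    _ ≤ 1 * ‖x‖ := mul_le_mul_of_nonneg_right h2 (norm_nonneg _)
    _ = ‖x‖ := one_mul _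

section WeakNormFacts

variable (p : ℝ) (hp : 1 ≤ p) {m : ℕ} (x : Fin m → E)

include hp

lemma weakNorm_bddAbove :
    BddAbove (range fun ψ : {φ : E →L[𝕜] 𝕜 // ‖φ‖ ≤ 1} =>
      (∑ j, ‖ψ.1 (x j)‖ ^ p) ^ (1 / p)) := by
  refine ⟨(∑ j, ‖x j‖ ^ p) ^ (1 / p), ?_⟩
  rintro - ⟨ψ, rfl⟩
  have hp0 : (0:ℝ) < p := lt_of_lt_of_le one_pos hp
  refine Real.rpow_le_rpow (Finset.sum_nonneg fun j _ => Real.rpow_nonneg (norm_nonneg _) _)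
    (Finset.sum_le_sum fun j _ => ?_) (by positivity)
  refine Real.rpow_le_rpow (norm_nonneg _) ?_ hp0.le
  calc ‖ψ.1 (x j)‖ ≤ ‖ψ.1‖ * ‖x j‖ := ContinuousLinearMap.le_opNorm _ _
    _ ≤ 1 * ‖x j‖ := mul_le_mul_of_nonneg_right ψ.2 (norm_nonneg _)
    _ = ‖x j‖ := one_mul _

lemma le_weakNorm (ψ : {φ : E →L[𝕜] 𝕜 // ‖φ‖ ≤ 1}) :
    (∑ j, ‖ψ.1 (x j)‖ ^ p) ^ (1 / p) ≤ weakNorm 𝕜 p x :=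
  le_ciSup (weakNorm_bddAbove p hp x) ψ

omit hp in
lemma weakNorm_nonneg : 0 ≤ weakNorm 𝕜 p x :=
  Real.iSup_nonneg fun ψ => Real.rpow_nonneg
    (Finset.sum_nonneg fun j _ => Real.rpow_nonneg (norm_nonneg _) _) _

end WeakNormFacts

section GCM

variable {F : Type*} [NormedAddCommGroup F] [NormedSpace 𝕜 F]

lemma smul_norm_rpow (p : ℝ) (hp0 : 0 < p) {V : Type*} [NormedAddCommGroup V]
    [NormedSpace 𝕜 V] (r : ℝ) (hr : 0 ≤ r) (v : V) :
    ‖((r ^ (1 / p) : ℝ) : 𝕜) • v‖ ^ p = r * ‖v‖ ^ p := by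
  rw [norm_smul, RCLike.norm_ofReal, abs_of_nonneg (Real.rpow_nonneg hr _),
    Real.mul_rpow (Real.rpow_nonneg hr _) (norm_nonneg v), ← Real.rpow_mul hr,
    one_div, inv_mul_cancel₀ hp0.ne', Real.rpow_one]

/-- The test functions in the Pietsch separation argument. -/
noncomputable def gCM (p : ℝ) (hp : 1 ≤ p) (C₀ : ℝ) (T : E →L[𝕜] F) {m : ℕ}
    (x : Fin m → E) : C((dualBall 𝕜 E : Set (WeakDual 𝕜 E)), ℝ) :=
  ∑ j, (ContinuousMap.const _ (‖T (x j)‖ ^ p) - C₀ ^ p • evCM p hp (x j))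

lemma gCM_apply (p : ℝ) (hp : 1 ≤ p) (C₀ : ℝ) (T : E →L[𝕜] F) {m : ℕ}
    (x : Fin m → E) (φ : (dualBall 𝕜 E : Set (WeakDual 𝕜 E))) :
    gCM p hp C₀ T x φ = ∑ j, (‖T (x j)‖ ^ p - C₀ ^ p * ‖(φ : WeakDual 𝕜 E) (x j)‖ ^ p) := by
  rw [gCM, ContinuousMap.sum_apply]
  refine Finset.sum_congr rfl fun j _ => ?_
  simp [evCM_apply]

lemma gCM_eq (p : ℝ) (hp : 1 ≤ p) (C₀ : ℝ) (T : E →L[𝕜] F) {m : ℕ}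
    (x : Fin m → E) (φ : (dualBall 𝕜 E : Set (WeakDual 𝕜 E))) :
    gCM p hp C₀ T x φ
      = (∑ j, ‖T (x j)‖ ^ p) - C₀ ^ p * ∑ j, ‖(φ : WeakDual 𝕜 E) (x j)‖ ^ p := by
  rw [gCM_apply, Finset.sum_sub_distrib, Finset.mul_sum]

lemma gCM_combo (p : ℝ) (hp : 1 ≤ p) (C₀ : ℝ) (T : E →L[𝕜] F) {m n : ℕ}
    (x : Fin m → E) (y : Fin n → E) {a b : ℝ} (ha : 0 ≤ a) (hb : 0 ≤ b) :
    a • gCM p hp C₀ T x + b • gCM p hp C₀ T y =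
      gCM p hp C₀ T (Fin.append (fun j => ((a ^ (1 / p) : ℝ) : 𝕜) • x j)
        (fun j => ((b ^ (1 / p) : ℝ) : 𝕜) • y j)) := by
  have hp0 : (0:ℝ) < p := lt_of_lt_of_le one_pos hp
  ext φ
  simp only [ContinuousMap.add_apply, ContinuousMap.smul_apply, smul_eq_mul]
  rw [gCM_apply, gCM_apply, gCM_apply, Fin.sum_univ_add]
  have hterm : ∀ (r : ℝ) (hr : 0 ≤ r) (z : E),
      ‖T (((r ^ (1 / p) : ℝ) : 𝕜) • z)‖ ^ p
        - C₀ ^ p * ‖(φ : WeakDual 𝕜 E) (((r ^ (1 / p) : ℝ) : 𝕜) • z)‖ ^ p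
      = r * (‖T z‖ ^ p - C₀ ^ p * ‖(φ : WeakDual 𝕜 E) z‖ ^ p) := by
    intro r hr z
    have h1 : T (((r ^ (1 / p) : ℝ) : 𝕜) • z) = ((r ^ (1 / p) : ℝ) : 𝕜) • T z := map_smul T _ z
    have h2 : (φ : WeakDual 𝕜 E) (((r ^ (1 / p) : ℝ) : 𝕜) • z)
        = ((r ^ (1 / p) : ℝ) : 𝕜) • ((φ : WeakDual 𝕜 E) z) := map_smul _ _ z
    rw [h1, h2, smul_norm_rpow p hp0 r hr, smul_norm_rpow p hp0 r hr]
    ring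
  have hL : ∀ j : Fin m,
      ‖T ((Fin.append (fun j => ((a ^ (1 / p) : ℝ) : 𝕜) • x j)
          (fun j => ((b ^ (1 / p) : ℝ) : 𝕜) • y j)) (Fin.castAdd n j))‖ ^ p
        - C₀ ^ p * ‖(φ : WeakDual 𝕜 E) ((Fin.append (fun j => ((a ^ (1 / p) : ℝ) : 𝕜) • x j)
          (fun j => ((b ^ (1 / p) : ℝ) : 𝕜) • y j)) (Fin.castAdd n j))‖ ^ p
      = a * (‖T (x j)‖ ^ p - C₀ ^ p * ‖(φ : WeakDual 𝕜 E) (x j)‖ ^ p) := by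
    intro j
    rw [Fin.append_left]
    exact hterm a ha (x j)
  have hR : ∀ j : Fin n,
      ‖T ((Fin.append (fun j => ((a ^ (1 / p) : ℝ) : 𝕜) • x j)
          (fun j => ((b ^ (1 / p) : ℝ) : 𝕜) • y j)) (Fin.natAdd m j))‖ ^ p
        - C₀ ^ p * ‖(φ : WeakDual 𝕜 E) ((Fin.append (fun j => ((a ^ (1 / p) : ℝ) : 𝕜) • x j)
          (fun j => ((b ^ (1 / p) : ℝ) : 𝕜) • y j)) (Fin.natAdd m j))‖ ^ p
      = b * (‖T (y j)‖ ^ p - C₀ ^ p * ‖(φ : WeakDual 𝕜 E) (y j)‖ ^ p) := by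
    intro j
    rw [Fin.append_right]
    exact hterm b hb (y j)
  rw [Finset.sum_congr rfl (fun j _ => hL j), Finset.sum_congr rfl (fun j _ => hR j),
    ← Finset.mul_sum, ← Finset.mul_sum]

end GCM

end Glue

set_option maxHeartbeats 2000000 in
/-- **Pietsch Domination Theorem.** A continuous linear operator `T : E → F` between Banach
spaces is absolutely `p`-summing iff there are `C ≥ 0` and a Borel probability measure `μ`
on the closed unit ball of the dual of `E`, with the weak-star topology, such that
`‖T x‖ ≤ C (∫ |φ x|^p dμ(φ))^{1/p}` for every `x`. -/
theorem pietsch_domination (𝕜 : Type*) [RCLike 𝕜] {E F : Type*} [NormedAddCommGroup E]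
    [NormedSpace 𝕜 E] [CompleteSpace E] [NormedAddCommGroup F] [NormedSpace 𝕜 F]
    [CompleteSpace F] (p : ℝ) (hp : 1 ≤ p) (T : E →L[𝕜] F) :
    AbsolutelySumming 𝕜 p T ↔
      ∃ C : ℝ, 0 ≤ C ∧ ∃ μ : Measure (dualBall 𝕜 E), IsProbabilityMeasure μ ∧
        ∀ x : E, ‖T x‖ ≤ C * (∫ φ, ‖(φ : WeakDual 𝕜 E) x‖ ^ p ∂μ) ^ (1 / p) := by
  classical
  have hp0 : (0:ℝ) < p := lt_of_lt_of_le one_pos hp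
  constructor
  · -- hard direction: summing → domination
    rintro ⟨C, hC, hsumC⟩
    set C₀ : ℝ := C + 1 with hC₀def
    have hC₀ : 0 < C₀ := by linarith
    have hC₀p : (0:ℝ) < C₀ ^ p := Real.rpow_pos_of_pos hC₀ p
    have hsum' : ∀ (m : ℕ) (x : Fin m → E),
        (∑ j, ‖T (x j)‖ ^ p) ^ (1 / p) ≤ C₀ * weakNorm 𝕜 p x := fun m x =>
      (hsumC m x).trans (mul_le_mul_of_nonneg_right (by linarith)
        (weakNorm_nonneg (𝕜 := 𝕜) p x))
    set S : Set C((dualBall 𝕜 E : Set (WeakDual 𝕜 E)), ℝ) :=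
      {g | ∃ (m : ℕ) (x : Fin m → E), g = gCM p hp C₀ T x} with hSdef
    set P : Set C((dualBall 𝕜 E : Set (WeakDual 𝕜 E)), ℝ) :=
      {h | ∀ φ, 0 < h φ} with hPdef
    have hSconv : Convex ℝ S := by
      rintro g₁ ⟨m, x, rfl⟩ g₂ ⟨n, y, rfl⟩ a b ha hb hab
      exact ⟨m + n, _, gCM_combo p hp C₀ T x y ha hb⟩
    have hPconv : Convex ℝ P := by
      rintro h₁ hh₁ h₂ hh₂ a b ha hb hab
      intro φ
      simp only [ContinuousMap.add_apply, ContinuousMap.smul_apply, smul_eq_mul]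
      rcases eq_or_lt_of_le ha with ha0 | ha0
      · have hb1 : b = 1 := by linarith
        rw [← ha0, hb1]
        simpa using hh₂ φ
      · rcases eq_or_lt_of_le hb with hb0 | hb0
        · have ha1 : a = 1 := by linarith
          rw [← hb0, ha1]
          simpa using hh₁ φ
        · have := hh₁ φ
          have := hh₂ φ
          positivity
    have hPopen : IsOpen P := by
      rw [Metric.isOpen_iff]
      intro h hh
      obtain ⟨φ₀, -, hmin'⟩ := isCompact_univ.exists_isMinOn Set.univ_nonempty
        h.continuous.continuousOn
      have hmin : ∀ φ, h φ₀ ≤ h φ := fun φ => hmin' (Set.mem_univ φ)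
      refine ⟨h φ₀, hh φ₀, fun g hg => fun φ => ?_⟩
      rw [Metric.mem_ball] at hg
      have h1 : dist (g φ) (h φ) ≤ dist g h := ContinuousMap.dist_apply_le_dist φ
      rw [Real.dist_eq] at h1
      have h2 := hmin φ
      have h3 := abs_lt.mp (lt_of_le_of_lt h1 hg)
      linarith [h3.1]
    have hdisj : Disjoint P S := by
      rw [Set.disjoint_right]
      rintro g ⟨m, x, rfl⟩ hgP
      set A : ℝ := ∑ j, ‖T (x j)‖ ^ p with hAdef
      have hA0 : 0 ≤ A := Finset.sum_nonneg fun j _ => Real.rpow_nonneg (norm_nonneg _) _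
      obtain ⟨φ₀, -, hmin'⟩ := isCompact_univ.exists_isMinOn Set.univ_nonempty
        (gCM p hp C₀ T x).continuous.continuousOn
      have hmin : ∀ φ, gCM p hp C₀ T x φ₀ ≤ gCM p hp C₀ T x φ := fun φ => hmin' (Set.mem_univ φ)
      set δ : ℝ := gCM p hp C₀ T x φ₀ with hδdef
      have hδ : 0 < δ := hgP φ₀
      set B : ℝ := (A - δ) / C₀ ^ p with hBdef
      have hptle : ∀ ψ : {φ : E →L[𝕜] 𝕜 // ‖φ‖ ≤ 1}, ∑ j, ‖ψ.1 (x j)‖ ^ p ≤ B := by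
        intro ψ
        set φ : (dualBall 𝕜 E : Set (WeakDual 𝕜 E)) :=
          ⟨WeakDual.toStrongDual.symm ψ.1, by
            show ‖WeakDual.toStrongDual (WeakDual.toStrongDual.symm ψ.1)‖ ≤ 1
            simpa using ψ.2⟩ with hφdef
        have hfge := hmin φ
        rw [gCM_eq] at hfge
        have heval : ∑ j, ‖(φ : WeakDual 𝕜 E) (x j)‖ ^ p = ∑ j, ‖ψ.1 (x j)‖ ^ p := rfl
        rw [heval] at hfge
        rw [hBdef, le_div_iff₀ hC₀p, ← hAdef] at *
        nlinarith [hfge]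
      have hB0 : 0 ≤ B := le_trans (Finset.sum_nonneg fun j _ =>
          Real.rpow_nonneg (norm_nonneg _) _) (hptle ⟨0, by simp⟩)
      have hw : weakNorm 𝕜 p x ≤ B ^ (1 / p) :=
        ciSup_le fun ψ => Real.rpow_le_rpow (Finset.sum_nonneg fun j _ =>
          Real.rpow_nonneg (norm_nonneg _) _) (hptle ψ) (by positivity)
      have hfin : A ^ (1 / p) ≤ C₀ * B ^ (1 / p) :=
        le_trans (hsum' m x) (mul_le_mul_of_nonneg_left hw hC₀.le)
      have h4 := Real.rpow_le_rpow (Real.rpow_nonneg hA0 _) hfin hp0.le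
      rw [← Real.rpow_mul hA0, one_div, inv_mul_cancel₀ hp0.ne', Real.rpow_one,
        Real.mul_rpow hC₀.le (Real.rpow_nonneg hB0 _), ← Real.rpow_mul hB0,
        inv_mul_cancel₀ hp0.ne', Real.rpow_one] at h4
      have h5 : C₀ ^ p * B = A - δ := by
        rw [hBdef, mul_div_cancel₀ _ hC₀p.ne']
      rw [h5] at h4
      linarith
    obtain ⟨L, u, hPu, hSu⟩ := geometric_hahn_banach_open hPconv hPopen hSconv hdisj
    have h0S : (0 : C((dualBall 𝕜 E : Set (WeakDual 𝕜 E)), ℝ)) ∈ S := by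
      refine ⟨0, Fin.elim0, ?_⟩
      ext φ
      rw [gCM_apply]
      simp
    have hu1 : u ≤ 0 := by simpa using hSu 0 h0S
    have hu2 : 0 ≤ u := by
      by_contra hcon
      push_neg at hcon
      have hkey : ∀ ε : ℝ, 0 < ε → ε * L 1 < u := by
        intro ε hε
        have hmem : (ε • (1 : C((dualBall 𝕜 E : Set (WeakDual 𝕜 E)), ℝ))) ∈ P := fun φ => by
          simp only [ContinuousMap.smul_apply, ContinuousMap.one_apply, smul_eq_mul, mul_one]
          exact hε
        have := hPu _ hmem
        rwa [L.map_smul, smul_eq_mul] at this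
      rcases le_or_gt 0 (L 1) with h | h
      · have := hkey 1 one_pos
        nlinarith
      · have hq : 0 < u / (2 * L 1) := div_pos_of_neg_of_neg hcon (by linarith)
        have := hkey _ hq
        have hL10 : L 1 ≠ 0 := ne_of_lt h
        have hq2 : u / (2 * L 1) * L 1 = u / 2 := by
          field_simp
        rw [hq2] at this
        linarith
    have hu : u = 0 := le_antisymm hu1 hu2
    have hL1 : L 1 < 0 := by
      have := hPu 1 (fun φ => one_pos)
      rwa [hu] at this
    have hLnp : ∀ f : C((dualBall 𝕜 E : Set (WeakDual 𝕜 E)), ℝ),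
        (∀ φ, 0 ≤ f φ) → L f ≤ 0 := by
      intro f hf
      by_contra hcon
      push_neg at hcon
      set ε : ℝ := L f / (2 * (-(L 1))) with hεdef
      have hε : 0 < ε := div_pos hcon (by linarith)
      have hmem : f + ε • 1 ∈ P := fun φ => by
        simp only [ContinuousMap.add_apply, ContinuousMap.smul_apply,
          ContinuousMap.one_apply, smul_eq_mul, mul_one]
        exact add_pos_of_nonneg_of_pos (hf φ) hε
      have hlt := hPu _ hmem
      rw [map_add, L.map_smul, smul_eq_mul, hu] at hlt
      have hL10 : L 1 ≠ 0 := ne_of_lt hL1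
      have hq : ε * L 1 = -(L f) / 2 := by
        rw [hεdef]
        field_simp
      rw [hq] at hlt
      linarith
    set c : ℝ := (-(L 1))⁻¹ with hcdef
    have hc : 0 < c := inv_pos.mpr (by linarith)
    set Λ : C((dualBall 𝕜 E : Set (WeakDual 𝕜 E)), ℝ) →ₗ[ℝ] ℝ :=
      c • (-(L.toLinearMap)) with hΛdef
    have hΛapp : ∀ f, Λ f = c * (-(L f)) := fun f => rfl
    have hΛpos : ∀ f : C((dualBall 𝕜 E : Set (WeakDual 𝕜 E)), ℝ),
        (∀ φ, 0 ≤ f φ) → 0 ≤ Λ f := fun f hf => by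
      rw [hΛapp]
      have := hLnp f hf
      nlinarith
    have hΛone : Λ 1 = 1 := by
      rw [hΛapp, hcdef]
      exact inv_mul_cancel₀ (by linarith)
    obtain ⟨μ, hμprob, hμdom⟩ := PietschAux.exists_dominating_prob_measure Λ hΛpos hΛone
    refine ⟨C₀, hC₀.le, μ, hμprob, fun x => ?_⟩
    have hxS : gCM p hp C₀ T (fun _ : Fin 1 => x) ∈ S := ⟨1, _, rfl⟩
    have hLg : 0 ≤ L (gCM p hp C₀ T (fun _ : Fin 1 => x)) := by
      have := hSu _ hxS
      rwa [hu] at this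
    have hΛg : Λ (gCM p hp C₀ T (fun _ : Fin 1 => x)) ≤ 0 := by
      rw [hΛapp]
      nlinarith
    have hdec : gCM p hp C₀ T (fun _ : Fin 1 => x)
        = (‖T x‖ ^ p) • (1 : C((dualBall 𝕜 E : Set (WeakDual 𝕜 E)), ℝ))
          - C₀ ^ p • evCM p hp x := by
      ext φ
      rw [gCM_apply]
      simp [evCM_apply]
    have hΛlin : Λ (gCM p hp C₀ T (fun _ : Fin 1 => x))
        = ‖T x‖ ^ p * Λ 1 - C₀ ^ p * Λ (evCM p hp x) := by
      rw [hdec, map_sub, Λ.map_smul, Λ.map_smul, smul_eq_mul, smul_eq_mul]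
    have h1 : ‖T x‖ ^ p ≤ C₀ ^ p * Λ (evCM p hp x) := by
      rw [hΛlin, hΛone, mul_one] at hΛg
      linarith
    have h2 : Λ (evCM p hp x) ≤ ∫ φ, evCM p hp x φ ∂μ :=
      hμdom _ (evCM_nonneg p hp x)
    set I : ℝ := ∫ φ, ‖(φ : WeakDual 𝕜 E) x‖ ^ p ∂μ with hIdef
    have hIeq : (∫ φ, evCM p hp x φ ∂μ) = I := rfl
    have h3 : ‖T x‖ ^ p ≤ C₀ ^ p * I := by
      rw [← hIeq]
      exact le_trans h1 (mul_le_mul_of_nonneg_left h2 hC₀p.le)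
    have hI : 0 ≤ I := by
      nlinarith [Real.rpow_nonneg (norm_nonneg (T x)) p]
    have h4 := Real.rpow_le_rpow (Real.rpow_nonneg (norm_nonneg (T x)) p) h3
      (by positivity : (0:ℝ) ≤ 1 / p)
    rwa [← Real.rpow_mul (norm_nonneg (T x)), mul_one_div_cancel hp0.ne', Real.rpow_one,
      Real.mul_rpow hC₀p.le hI, ← Real.rpow_mul hC₀.le, mul_one_div_cancel hp0.ne',
      Real.rpow_one] at h4
  · -- easy direction: domination → summing
    rintro ⟨C, hC, μ, hμprob, hdom⟩
    refine ⟨C, hC, fun m x => ?_⟩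
    have hint : ∀ z : E,
        Integrable (fun φ : (dualBall 𝕜 E : Set (WeakDual 𝕜 E)) =>
          ‖(φ : WeakDual 𝕜 E) z‖ ^ p) μ := by
      intro z
      refine (integrable_const (‖z‖ ^ p)).mono'
        ((evCM p hp z).continuous.aestronglyMeasurable)
        (Filter.Eventually.of_forall fun φ => ?_)
      rw [Real.norm_eq_abs, abs_of_nonneg (Real.rpow_nonneg (norm_nonneg _) _)]
      exact Real.rpow_le_rpow (norm_nonneg _) (dualBall_apply_le φ z) hp0.le
    have hptw : ∀ φ : (dualBall 𝕜 E : Set (WeakDual 𝕜 E)),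
        ∑ j, ‖(φ : WeakDual 𝕜 E) (x j)‖ ^ p ≤ weakNorm 𝕜 p x ^ p := by
      intro φ
      set ψ : {ψ : E →L[𝕜] 𝕜 // ‖ψ‖ ≤ 1} :=
        ⟨WeakDual.toStrongDual (φ : WeakDual 𝕜 E), φ.2⟩ with hψdef
      have h1 := le_weakNorm p hp x ψ
      have h0 : 0 ≤ ∑ j, ‖ψ.1 (x j)‖ ^ p :=
        Finset.sum_nonneg fun j _ => Real.rpow_nonneg (norm_nonneg _) _
      have h3 := Real.rpow_le_rpow (Real.rpow_nonneg h0 _) h1 hp0.le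
      rw [← Real.rpow_mul h0, one_div, inv_mul_cancel₀ hp0.ne', Real.rpow_one] at h3
      exact h3
    have hterm : ∀ j, ‖T (x j)‖ ^ p
        ≤ C ^ p * ∫ φ, ‖(φ : WeakDual 𝕜 E) (x j)‖ ^ p ∂μ := by
      intro j
      have h := hdom (x j)
      have hInn : 0 ≤ ∫ φ, ‖(φ : WeakDual 𝕜 E) (x j)‖ ^ p ∂μ :=
        integral_nonneg fun φ => Real.rpow_nonneg (norm_nonneg _) _
      have h2 := Real.rpow_le_rpow (norm_nonneg _) h hp0.le
      rwa [Real.mul_rpow hC (Real.rpow_nonneg hInn _), ← Real.rpow_mul hInn, one_div,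
        inv_mul_cancel₀ hp0.ne', Real.rpow_one] at h2
    have hsum : ∑ j, ‖T (x j)‖ ^ p
        ≤ C ^ p * ∫ φ, (∑ j, ‖(φ : WeakDual 𝕜 E) (x j)‖ ^ p) ∂μ := by
      calc ∑ j, ‖T (x j)‖ ^ p
          ≤ ∑ j, C ^ p * ∫ φ, ‖(φ : WeakDual 𝕜 E) (x j)‖ ^ p ∂μ :=
            Finset.sum_le_sum fun j _ => hterm j
        _ = C ^ p * ∑ j, ∫ φ, ‖(φ : WeakDual 𝕜 E) (x j)‖ ^ p ∂μ := by
            rw [Finset.mul_sum]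
        _ = C ^ p * ∫ φ, (∑ j, ‖(φ : WeakDual 𝕜 E) (x j)‖ ^ p) ∂μ := by
            rw [integral_finset_sum _ (fun j _ => hint (x j))]
    have hint2 : (∫ φ, (∑ j, ‖(φ : WeakDual 𝕜 E) (x j)‖ ^ p) ∂μ)
        ≤ weakNorm 𝕜 p x ^ p := by
      calc (∫ φ, (∑ j, ‖(φ : WeakDual 𝕜 E) (x j)‖ ^ p) ∂μ)
          ≤ ∫ _, weakNorm 𝕜 p x ^ p ∂μ :=
            integral_mono (integrable_finset_sum _ fun j _ => hint (x j))
              (integrable_const _) hptw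
        _ = weakNorm 𝕜 p x ^ p := by simp [measure_univ]
    have hCp : 0 ≤ C ^ p := Real.rpow_nonneg hC _
    have hfinal : ∑ j, ‖T (x j)‖ ^ p ≤ C ^ p * weakNorm 𝕜 p x ^ p :=
      le_trans hsum (mul_le_mul_of_nonneg_left hint2 hCp)
    have h0 : 0 ≤ ∑ j, ‖T (x j)‖ ^ p :=
      Finset.sum_nonneg fun j _ => Real.rpow_nonneg (norm_nonneg _) _
    have h5 := Real.rpow_le_rpow h0 hfinal (by positivity : (0:ℝ) ≤ 1 / p)
    rwa [Real.mul_rpow hCp (Real.rpow_nonneg (weakNorm_nonneg (𝕜 := 𝕜) p x) _),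
      ← Real.rpow_mul hC, ← Real.rpow_mul (weakNorm_nonneg (𝕜 := 𝕜) p x),
      mul_one_div_cancel hp0.ne', Real.rpow_one, Real.rpow_one] at h5
end

section
/- For every positive integer n there exists a constant C_n ≥ 0 such that for all Banach spaces E_1,…,E_n over ℂ (or ℝ), every continuous n-linear form U : E_1 × ⋯ × E_n → 𝕂, every N ∈ ℕ and all vectors x_j^{(k)} ∈ E_k (k = 1,…,n, j = 1,…,N), one has (∑_{j_1,…,j_n=1}^N |U(x_{j_1}^{(1)},…,x_{j_n}^{(n)})|^{2n/(n+1)})^{(n+1)/(2n)} ≤ C_n ‖U‖ ∏_{k=1}^n ‖(x_j^{(k)})_{j=1}^N‖_{w,1}. (Bohnenblust–Hille inequality, rewritten form.) -/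
open scoped BigOperators

open scoped NNReal

namespace BH

def sg (b : Bool) : ℝ := if b then 1 else -1

lemma sg_mul_self (b : Bool) : sg b * sg b = 1 := by cases b <;> simp [sg]

lemma sg_sq (b : Bool) : sg b ^ 2 = 1 := by cases b <;> simp [sg]

lemma sg_not (b : Bool) : sg (!b) = - sg b := by cases b <;> simp [sg]

/-- flip one coordinate of a sign vector -/
def flp {N : ℕ} (j : Fin N) (ε : Fin N → Bool) : Fin N → Bool := Function.update ε j (!(ε j))

lemma flp_invol {N : ℕ} (j : Fin N) : Function.Involutive (flp j) := by
  intro ε; funext i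
  by_cases h : i = j
  · subst h; simp [flp]
  · simp [flp, Function.update_of_ne h]

lemma flp_apply_self {N : ℕ} (j : Fin N) (ε : Fin N → Bool) : flp j ε j = !(ε j) := by
  simp [flp]

lemma flp_apply_ne {N : ℕ} {j l : Fin N} (h : l ≠ j) (ε : Fin N → Bool) : flp j ε l = ε l := by
  simp [flp, Function.update_of_ne h]

lemma sum_flp {N : ℕ} (j : Fin N) (F : (Fin N → Bool) → ℝ) :
    ∑ ε, F ε = ∑ ε, F (flp j ε) :=
  (Fintype.sum_bijective _ (flp_invol j).bijective _ _ (fun _ => rfl)).symm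

lemma sum_eq_zero_of_flp {N : ℕ} (j : Fin N) (F : (Fin N → Bool) → ℝ)
    (h : ∀ ε, F (flp j ε) = - F ε) : ∑ ε, F ε = 0 := by
  have h1 := sum_flp j F
  have h2 : ∑ ε, F (flp j ε) = - ∑ ε, F ε := by
    rw [← Finset.sum_neg_distrib]
    exact Finset.sum_congr rfl fun ε _ => h ε
  linarith

lemma card_signs (N : ℕ) : (Fintype.card (Fin N → Bool) : ℝ) = 2 ^ N := by
  simp [Fintype.card_fun]

lemma sum_sg_mul_sg {N : ℕ} (j l : Fin N) :
    ∑ ε : Fin N → Bool, sg (ε j) * sg (ε l) = if j = l then (2:ℝ)^N else 0 := by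
  split_ifs with h
  · subst h
    rw [Finset.sum_congr rfl (fun ε _ => sg_mul_self (ε j))]
    simp [card_signs]
  · apply sum_eq_zero_of_flp j
    intro ε
    rw [flp_apply_self, flp_apply_ne (fun hh => h (hh.symm)) , sg_not]
    ring

lemma sum_sq_sign {N : ℕ} (s : Finset (Fin N)) (r : Fin N → ℝ) :
    ∑ ε : Fin N → Bool, (∑ j ∈ s, sg (ε j) * r j)^2 = 2^N * ∑ j ∈ s, (r j)^2 := by
  have hpt : ∀ ε : Fin N → Bool, (∑ j ∈ s, sg (ε j) * r j)^2
      = ∑ j ∈ s, ∑ l ∈ s, (sg (ε j) * sg (ε l)) * (r j * r l) := by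
    intro ε
    rw [sq, Finset.sum_mul_sum]
    exact Finset.sum_congr rfl fun j _ => Finset.sum_congr rfl fun l _ => by ring
  rw [Finset.sum_congr rfl (fun ε _ => hpt ε), Finset.sum_comm]
  have : ∀ j ∈ s, ∑ ε : Fin N → Bool, ∑ l ∈ s, (sg (ε j) * sg (ε l)) * (r j * r l)
      = 2^N * (r j)^2 := by
    intro j hj
    rw [Finset.sum_comm]
    have h1 : ∀ l ∈ s, ∑ ε : Fin N → Bool, (sg (ε j) * sg (ε l)) * (r j * r l)
        = (if j = l then (2:ℝ)^N else 0) * (r j * r l) := by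
      intro l _
      rw [← Finset.sum_mul, sum_sg_mul_sg]
    rw [Finset.sum_congr rfl h1, Finset.sum_eq_single j]
    · simp [sq]
    · intro l _ hl; simp [Ne.symm hl]
    · intro h; exact absurd hj h
  rw [Finset.sum_congr rfl this, ← Finset.mul_sum]

lemma flip_inv_sum {N : ℕ} {s : Finset (Fin N)} {a : Fin N} (ha : a ∉ s) (r : Fin N → ℝ)
    (ε : Fin N → Bool) : ∑ j ∈ s, sg (flp a ε j) * r j = ∑ j ∈ s, sg (ε j) * r j :=
  Finset.sum_congr rfl fun j hj => by
    rw [flp_apply_ne (fun h => ha (by rwa [h] at hj)) ]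

lemma sum_pow4_sign {N : ℕ} (s : Finset (Fin N)) (r : Fin N → ℝ) :
    ∑ ε : Fin N → Bool, (∑ j ∈ s, sg (ε j) * r j)^4 ≤ 3 * 2^N * (∑ j ∈ s, (r j)^2)^2 := by
  induction s using Finset.induction_on with
  | empty => simp
  | @insert a s ha ih =>
    have hpt : ∀ ε : Fin N → Bool,
        (∑ j ∈ insert a s, sg (ε j) * r j)^4
        = (∑ j ∈ s, sg (ε j) * r j)^4 + 6*(r a)^2*(∑ j ∈ s, sg (ε j) * r j)^2 + (r a)^4
          + sg (ε a) * (4 * (∑ j ∈ s, sg (ε j) * r j)^3 * r a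
              + 4 * (∑ j ∈ s, sg (ε j) * r j) * (r a)^3) := by
      intro ε
      rw [Finset.sum_insert ha]
      set u := sg (ε a) with hu
      set T := ∑ j ∈ s, sg (ε j) * r j with hT
      have h2 : u^2 = 1 := sg_sq (ε a)
      set t := r a with ht
      linear_combination ((u^2+1)*t^4 + 4*u*T*t^3 + 6*t^2*T^2) * h2
    rw [Finset.sum_congr rfl (fun ε _ => hpt ε)]
    rw [Finset.sum_add_distrib, Finset.sum_add_distrib, Finset.sum_add_distrib]
    have hodd : ∑ ε : Fin N → Bool, sg (ε a) * (4 * (∑ j ∈ s, sg (ε j) * r j)^3 * r a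
        + 4 * (∑ j ∈ s, sg (ε j) * r j) * (r a)^3) = 0 := by
      apply sum_eq_zero_of_flp a
      intro ε
      rw [flip_inv_sum ha, flp_apply_self, sg_not]
      ring
    have hsq : ∑ ε : Fin N → Bool, 6*(r a)^2*(∑ j ∈ s, sg (ε j) * r j)^2
        = 6*(r a)^2 * (2^N * ∑ j ∈ s, (r j)^2) := by
      rw [← Finset.mul_sum, sum_sq_sign]
    have hconst : ∑ _ε : Fin N → Bool, (r a)^4 = 2^N * (r a)^4 := by
      rw [Finset.sum_const, nsmul_eq_mul]
      have := card_signs N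
      simp only [Finset.card_univ]
      rw [this]
    rw [hodd, hsq, hconst, Finset.sum_insert ha, add_zero]
    have hTs : (0:ℝ) ≤ ∑ j ∈ s, (r j)^2 := Finset.sum_nonneg fun j _ => sq_nonneg _
    have h2N : (0:ℝ) < 2^N := by positivity
    have key : (2:ℝ)^N * r a ^ 4 ≤ 3 * 2^N * r a ^ 4 := by
      have h4 : (0:ℝ) ≤ 2 * 2^N * r a ^ 4 := by positivity
      linarith
    have expand : 3 * (2:ℝ)^N * ((r a)^2 + ∑ j ∈ s, (r j)^2)^2
        = 3*2^N*(∑ j ∈ s, (r j)^2)^2 + 6*2^N*(r a)^2*(∑ j ∈ s, (r j)^2) + 3*2^N*(r a)^4 := by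
      ring
    rw [expand]
    linarith [ih, key]


variable {𝕜 : Type*} [RCLike 𝕜]

lemma norm_sg (b : Bool) : ‖((sg b : ℝ) : 𝕜)‖ = 1 := by
  cases b <;> simp [sg]

lemma norm_sq_eq (z : 𝕜) : ‖z‖^2 = RCLike.re z ^ 2 + RCLike.im z ^ 2 := by
  rw [← RCLike.normSq_eq_def']
  rw [RCLike.normSq_apply]; ring

lemma re_sum_sign {N : ℕ} (c : Fin N → 𝕜) (ε : Fin N → Bool) :
    RCLike.re (∑ j, sg (ε j) • c j) = ∑ j, sg (ε j) * RCLike.re (c j) := by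
  rw [map_sum]
  exact Finset.sum_congr rfl fun j _ => RCLike.smul_re _ _

lemma im_sum_sign {N : ℕ} (c : Fin N → 𝕜) (ε : Fin N → Bool) :
    RCLike.im (∑ j, sg (ε j) • c j) = ∑ j, sg (ε j) * RCLike.im (c j) := by
  rw [map_sum]
  exact Finset.sum_congr rfl fun j _ => RCLike.smul_im _ _

lemma sum_norm_sq_sign {N : ℕ} (c : Fin N → 𝕜) :
    ∑ ε : Fin N → Bool, ‖∑ j, sg (ε j) • c j‖^2 = 2^N * ∑ j, ‖c j‖^2 := by
  have hpt : ∀ ε : Fin N → Bool, ‖∑ j, sg (ε j) • c j‖^2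
      = (∑ j, sg (ε j) * RCLike.re (c j))^2 + (∑ j, sg (ε j) * RCLike.im (c j))^2 := by
    intro ε; rw [norm_sq_eq, re_sum_sign, im_sum_sign]
  rw [Finset.sum_congr rfl (fun ε _ => hpt ε), Finset.sum_add_distrib,
    sum_sq_sign Finset.univ (fun j => RCLike.re (c j)),
    sum_sq_sign Finset.univ (fun j => RCLike.im (c j)), ← mul_add]
  congr 1
  rw [← Finset.sum_add_distrib]
  exact Finset.sum_congr rfl fun j _ => (norm_sq_eq (c j)).symm

lemma sum_norm_pow4_sign {N : ℕ} (c : Fin N → 𝕜) :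
    ∑ ε : Fin N → Bool, ‖∑ j, sg (ε j) • c j‖^4 ≤ 3 * 2^N * (∑ j, ‖c j‖^2)^2 := by
  set X : (Fin N → Bool) → ℝ := fun ε => (∑ j, sg (ε j) * RCLike.re (c j))^2 with hX
  set Y : (Fin N → Bool) → ℝ := fun ε => (∑ j, sg (ε j) * RCLike.im (c j))^2 with hY
  have hpt : ∀ ε : Fin N → Bool, ‖∑ j, sg (ε j) • c j‖^4 = X ε^2 + 2*(X ε*Y ε) + Y ε^2 := by
    intro ε
    have : ‖∑ j, sg (ε j) • c j‖^4 = (‖∑ j, sg (ε j) • c j‖^2)^2 := by ring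
    rw [this, norm_sq_eq, re_sum_sign, im_sum_sign]; ring
  rw [Finset.sum_congr rfl (fun ε _ => hpt ε), Finset.sum_add_distrib, Finset.sum_add_distrib]
  set P := ∑ j, RCLike.re (c j)^2 with hP
  set Q := ∑ j, RCLike.im (c j)^2 with hQ
  have hPn : 0 ≤ P := Finset.sum_nonneg fun j _ => sq_nonneg _
  have hQn : 0 ≤ Q := Finset.sum_nonneg fun j _ => sq_nonneg _
  have hXX : ∑ ε, X ε^2 ≤ 3 * 2^N * P^2 := by
    have he : ∑ ε, X ε^2 = ∑ ε : Fin N → Bool, (∑ j, sg (ε j) * RCLike.re (c j))^4 :=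
      Finset.sum_congr rfl fun ε _ => by simp only [hX]; ring
    rw [he]
    exact sum_pow4_sign (N := N) Finset.univ (fun j => RCLike.re (c j))
  have hYY : ∑ ε, Y ε^2 ≤ 3 * 2^N * Q^2 := by
    have he : ∑ ε, Y ε^2 = ∑ ε : Fin N → Bool, (∑ j, sg (ε j) * RCLike.im (c j))^4 :=
      Finset.sum_congr rfl fun ε _ => by simp only [hY]; ring
    rw [he]
    exact sum_pow4_sign (N := N) Finset.univ (fun j => RCLike.im (c j))
  have hXY : ∑ ε, X ε * Y ε ≤ 3 * 2^N * (P*Q) := by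
    have hcs := Finset.sum_mul_sq_le_sq_mul_sq Finset.univ X Y
    have h1 : (∑ ε, X ε * Y ε)^2 ≤ (3 * 2^N * P^2) * (3 * 2^N * Q^2) := by
      refine hcs.trans ?_
      have h2 : (0:ℝ) ≤ ∑ ε, Y ε^2 := Finset.sum_nonneg fun ε _ => sq_nonneg _
      exact mul_le_mul hXX hYY h2 (by positivity)
    have h3 : (0:ℝ) ≤ ∑ ε, X ε * Y ε :=
      Finset.sum_nonneg fun ε _ => mul_nonneg (sq_nonneg _) (sq_nonneg _)
    have h4 := Real.sqrt_le_sqrt h1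
    rwa [Real.sqrt_sq h3,
      show (3 * (2:ℝ)^N * P^2) * (3 * 2^N * Q^2) = (3 * 2^N * (P*Q))^2 by ring,
      Real.sqrt_sq (by positivity)] at h4
  have hsum : ∑ j, ‖c j‖^2 = P + Q := by
    rw [hP, hQ, ← Finset.sum_add_distrib]
    exact Finset.sum_congr rfl fun j _ => norm_sq_eq (c j)
  rw [hsum]
  have h2 : ∑ ε : Fin N → Bool, 2*(X ε * Y ε) = 2 * ∑ ε, X ε * Y ε := by
    rw [Finset.mul_sum]
  rw [h2]
  nlinarith [hXX, hYY, hXY]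

/-- Khinchine-type inequality: L² of a Rademacher sum controlled by L¹. -/
lemma khinchine {N : ℕ} (c : Fin N → 𝕜) :
    ∑ j, ‖c j‖^2 ≤ 3 * (((2:ℝ)^N)⁻¹ * ∑ ε : Fin N → Bool, ‖∑ j, sg (ε j) • c j‖)^2 := by
  set x : (Fin N → Bool) → ℝ := fun ε => ‖∑ j, sg (ε j) • c j‖ with hx
  have hxn : ∀ ε, 0 ≤ x ε := fun ε => norm_nonneg _
  set C2 := ∑ j, ‖c j‖^2 with hC2
  have hC2n : 0 ≤ C2 := Finset.sum_nonneg fun j _ => sq_nonneg _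
  set Q1 := ∑ ε, x ε with hQ1
  have hQ1n : 0 ≤ Q1 := Finset.sum_nonneg fun ε _ => hxn ε
  have hP2 : ∑ ε, x ε^2 = 2^N * C2 := sum_norm_sq_sign c
  have hR4 : ∑ ε, x ε^4 ≤ 3 * 2^N * C2^2 := sum_norm_pow4_sign c
  have cs1 : (∑ ε, x ε^2)^2 ≤ (∑ ε, x ε) * (∑ ε, x ε^3) := by
    refine Finset.sum_sq_le_sum_mul_sum_of_sq_eq_mul Finset.univ
      (fun ε _ => hxn ε) (fun ε _ => by positivity) (fun ε _ => by ring)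
  have cs2 : (∑ ε, x ε^3)^2 ≤ (∑ ε, x ε^2) * (∑ ε, x ε^4) := by
    refine Finset.sum_sq_le_sum_mul_sum_of_sq_eq_mul Finset.univ
      (fun ε _ => by positivity) (fun ε _ => by positivity) (fun ε _ => by ring)
  rcases eq_or_lt_of_le hC2n with h0 | hpos
  · rw [← h0]; positivity
  have h2N : (0:ℝ) < 2^N := by positivity
  -- P2⁴ ≤ Q1² P3² ≤ Q1² P2 R4
  have hP3n : 0 ≤ ∑ ε, x ε^3 := Finset.sum_nonneg fun ε _ => by positivity
  have key : ((2:ℝ)^N * C2)^4 ≤ Q1^2 * (2^N * C2) * (3 * 2^N * C2^2) := by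
    have h1 : (∑ ε, x ε^2)^4 ≤ Q1^2 * ((∑ ε, x ε^3)^2) := by
      calc (∑ ε, x ε^2)^4 = ((∑ ε, x ε^2)^2)^2 := by ring
        _ ≤ ((∑ ε, x ε) * (∑ ε, x ε^3))^2 := by
            apply pow_le_pow_left₀ (by positivity) cs1
        _ = Q1^2 * ((∑ ε, x ε^3)^2) := by rw [hQ1]; ring
    have h2 : Q1^2 * ((∑ ε, x ε^3)^2) ≤ Q1^2 * ((∑ ε, x ε^2) * (∑ ε, x ε^4)) :=
      mul_le_mul_of_nonneg_left cs2 (by positivity)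
    have h3 : Q1^2 * ((∑ ε, x ε^2) * (∑ ε, x ε^4)) ≤ Q1^2 * ((2^N * C2) * (3 * 2^N * C2^2)) := by
      apply mul_le_mul_of_nonneg_left _ (by positivity)
      rw [hP2]
      exact mul_le_mul_of_nonneg_left hR4 (by positivity)
    calc ((2:ℝ)^N * C2)^4 = (∑ ε, x ε^2)^4 := by rw [hP2]
      _ ≤ Q1^2 * ((∑ ε, x ε^3)^2) := h1
      _ ≤ Q1^2 * ((∑ ε, x ε^2) * (∑ ε, x ε^4)) := h2
      _ ≤ Q1^2 * ((2^N * C2) * (3 * 2^N * C2^2)) := h3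
      _ = Q1^2 * (2^N * C2) * (3 * 2^N * C2^2) := by ring
  -- cancel (2^N)^2 * C2^3 > 0
  have hK : (0:ℝ) < (2^N)^2 * C2^3 := by positivity
  have main : (2:ℝ)^N * (2^N * C2) ≤ 3 * Q1^2 := by
    have e1 : ((2:ℝ)^N * C2)^4 = (2^N * (2^N * C2)) * ((2^N)^2 * C2^3) := by ring
    have e2 : Q1^2 * ((2:ℝ)^N * C2) * (3 * 2^N * C2^2) = (3 * Q1^2) * ((2^N)^2 * C2^3) := by ring
    rw [e1, e2] at key
    exact le_of_mul_le_mul_right key hK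
  -- conclude
  have hmain2 : C2 * ((2:ℝ)^N)^2 ≤ 3 * Q1^2 := by nlinarith [main]
  calc C2 = (C2 * ((2:ℝ)^N)^2) * (((2:ℝ)^N)^2)⁻¹ := by field_simp
    _ ≤ (3 * Q1^2) * (((2:ℝ)^N)^2)⁻¹ :=
        mul_le_mul_of_nonneg_right hmain2 (by positivity)
    _ = 3 * (((2:ℝ)^N)⁻¹ * Q1)^2 := by rw [mul_pow, inv_pow]; ring


lemma sum_pi_succ {M : Type*} [AddCommMonoid M] {N n : ℕ} (F : (Fin (n+1) → Fin N) → M) :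
    ∑ j, F j = ∑ j' : Fin n → Fin N, ∑ a, F (Fin.cons a j') := by
  rw [← (Fin.consEquiv (fun _ => Fin N)).sum_comp F, Fintype.sum_prod_type, Finset.sum_comm]
  rfl

lemma sum_pi_insertNth {M : Type*} [AddCommMonoid M] {N n : ℕ} (k : Fin (n+1))
    (F : (Fin (n+1) → Fin N) → M) :
    ∑ j, F j = ∑ jh : Fin n → Fin N, ∑ a, F (k.insertNth a jh) := by
  rw [← (Fin.insertNthEquiv (fun _ => Fin N) k).sum_comp F, Fintype.sum_prod_type,
    Finset.sum_comm]
  rfl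

/-- nested mixed ℓ-norm, innermost coordinate `0`. -/
noncomputable def Mnorm {N : ℕ} : {n : ℕ} → (Fin n → ℝ) → ((Fin n → Fin N) → ℝ≥0) → ℝ≥0
  | 0, _, f => f default
  | _+1, e, f => Mnorm (fun i => e i.succ) (fun j => (∑ a, f (Fin.cons a j) ^ (e 0)) ^ (1/(e 0)))

@[simp] lemma Mnorm_zero {N : ℕ} (e : Fin 0 → ℝ) (f : (Fin 0 → Fin N) → ℝ≥0) :
    Mnorm e f = f default := rfl

lemma Mnorm_succ {N n : ℕ} (e : Fin (n+1) → ℝ) (f : (Fin (n+1) → Fin N) → ℝ≥0) :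
    Mnorm e f = Mnorm (fun i => e i.succ)
      (fun j => (∑ a, f (Fin.cons a j) ^ (e 0)) ^ (1/(e 0))) := rfl

lemma Mnorm_const {N : ℕ} {q : ℝ} (hq : q ≠ 0) :
    ∀ {n : ℕ} (f : (Fin n → Fin N) → ℝ≥0), Mnorm (fun _ => q) f = (∑ j, f j ^ q) ^ (1/q) := by
  intro n
  induction n with
  | zero =>
    intro f
    rw [Mnorm_zero, Fintype.sum_unique, NNReal.rpow_inv_rpow_self hq]
  | succ n ih =>
    intro f
    rw [Mnorm_succ, ih]
    congr 1
    rw [sum_pi_succ (fun j => f j ^ q)]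
    refine Finset.sum_congr rfl fun j' _ => ?_
    rw [← NNReal.rpow_mul, one_div_mul_cancel hq, NNReal.rpow_one]

lemma Mnorm_rpow {N : ℕ} :
    ∀ {n : ℕ} (e : Fin n → ℝ), (∀ i, e i ≠ 0) → ∀ (s : ℝ), s ≠ 0 →
      ∀ (f : (Fin n → Fin N) → ℝ≥0),
      Mnorm e (fun j => f j ^ s) = (Mnorm (fun i => e i * s) f) ^ s := by
  intro n
  induction n with
  | zero => intro e he s hs f; rfl
  | succ n ih =>
    intro e he s hs f
    rw [Mnorm_succ, Mnorm_succ]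
    have h1 : ∀ j : Fin n → Fin N,
        (∑ a, ((f (Fin.cons a j)) ^ s) ^ (e 0)) ^ (1/(e 0))
        = ((∑ a, f (Fin.cons a j) ^ (e 0 * s)) ^ (1/(e 0 * s))) ^ s := by
      intro j
      rw [← NNReal.rpow_mul]
      have hexp : (1:ℝ)/(e 0 * s) * s = 1/(e 0) := by
        rw [one_div, one_div, mul_inv, mul_assoc, inv_mul_cancel₀ hs, mul_one]
      rw [hexp]
      congr 1
      refine Finset.sum_congr rfl fun a _ => ?_
      rw [← NNReal.rpow_mul]
      congr 1
      ring
    calc Mnorm (fun i => e i.succ) (fun j => (∑ a, ((f (Fin.cons a j)) ^ s) ^ (e 0)) ^ (1/(e 0)))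
        = Mnorm (fun i => e i.succ)
            (fun j => ((∑ a, f (Fin.cons a j) ^ (e 0 * s)) ^ (1/(e 0 * s))) ^ s) := by
          congr 1; funext j; exact h1 j
      _ = (Mnorm (fun i => e i.succ * s)
            (fun j => (∑ a, f (Fin.cons a j) ^ (e 0 * s)) ^ (1/(e 0 * s)))) ^ s := by
          exact ih (fun i => e i.succ) (fun i => he i.succ) s hs _

/-- flat generalized Hölder inequality -/
lemma flat_holder {ι κ : Type*} [Fintype ι] [Fintype κ] (r : κ → ℝ) (hr : ∀ k, 0 < r k)
    (hsum : ∑ k, (r k)⁻¹ = 1) (g : κ → ι → ℝ≥0) :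
    ∑ a, ∏ k, g k a ≤ ∏ k, (∑ a, g k a ^ (r k)) ^ (1/(r k)) := by
  by_cases hz : ∃ k₀, ∑ a, g k₀ a ^ (r k₀) = 0
  · obtain ⟨k₀, hk₀⟩ := hz
    have hg0 : ∀ a, g k₀ a = 0 := fun a =>
      (NNReal.rpow_eq_zero (hr k₀).ne').mp
        ((Finset.sum_eq_zero_iff.mp hk₀) a (Finset.mem_univ a))
    have hL : ∑ a, ∏ k, g k a = 0 :=
      Finset.sum_eq_zero fun a _ => Finset.prod_eq_zero (Finset.mem_univ k₀) (hg0 a)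
    simp [hL]
  · push_neg at hz
    set t : κ → ℝ≥0 := fun k => ∑ a, g k a ^ (r k) with ht
    set w : κ → ℝ≥0 := fun k => (⟨(r k)⁻¹, (inv_pos.mpr (hr k)).le⟩ : ℝ≥0) with hw
    have hwc : ∀ k, (w k : ℝ) = (r k)⁻¹ := fun k => rfl
    have hw1 : ∑ k, w k = 1 := by
      have hco : ((∑ k, w k : ℝ≥0) : ℝ) = ∑ k, (r k)⁻¹ := by
        rw [NNReal.coe_sum]
        exact Finset.sum_congr rfl fun k _ => hwc k
      have : ((∑ k, w k : ℝ≥0) : ℝ) = 1 := by rw [hco, hsum]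
      exact_mod_cast this
    have key : ∀ a, ∏ k, g k a ≤ (∑ k, w k * (g k a ^ (r k) / t k)) * ∏ k, t k ^ ((r k)⁻¹) := by
      intro a
      have am := NNReal.geom_mean_le_arith_mean_weighted Finset.univ w
        (fun k => g k a ^ (r k) / t k) hw1
      have lhs_eq : (∏ k, (g k a ^ (r k) / t k) ^ (w k : ℝ))
          = (∏ k, g k a) / ∏ k, t k ^ ((r k)⁻¹) := by
        rw [← Finset.prod_div_distrib]
        refine Finset.prod_congr rfl fun k _ => ?_
        rw [hwc, NNReal.div_rpow, ← NNReal.rpow_mul, mul_inv_cancel₀ (hr k).ne',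
          NNReal.rpow_one]
      rw [lhs_eq] at am
      have htk : ∀ k, t k ^ ((r k)⁻¹) ≠ 0 := by
        intro k
        simp only [ne_eq, NNReal.rpow_eq_zero_iff]
        rintro ⟨h0, -⟩
        exact hz k h0
      have hprod : ∏ k, t k ^ ((r k)⁻¹) ≠ 0 := Finset.prod_ne_zero_iff.mpr fun k _ => htk k
      exact (div_le_iff₀ (pos_iff_ne_zero.mpr hprod)).mp am
    have sum_z : ∀ k, ∑ a, (g k a ^ (r k) / t k) = 1 := by
      intro k
      rw [← Finset.sum_div]
      exact div_self (hz k)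
    have final : ∑ a, ∏ k, g k a ≤ ∏ k, t k ^ ((r k)⁻¹) := by
      calc ∑ a, ∏ k, g k a
          ≤ ∑ a, (∑ k, w k * (g k a ^ (r k) / t k)) * ∏ k, t k ^ ((r k)⁻¹) :=
            Finset.sum_le_sum fun a _ => key a
        _ = (∑ a, ∑ k, w k * (g k a ^ (r k) / t k)) * ∏ k, t k ^ ((r k)⁻¹) := by
            rw [Finset.sum_mul]
        _ = (∑ k, w k * ∑ a, (g k a ^ (r k) / t k)) * ∏ k, t k ^ ((r k)⁻¹) := by
            congr 1
            rw [Finset.sum_comm]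
            exact Finset.sum_congr rfl fun k _ => (Finset.mul_sum _ _ _).symm
        _ = ∏ k, t k ^ ((r k)⁻¹) := by
            have : ∑ k, w k * ∑ a, (g k a ^ (r k) / t k) = 1 := by
              rw [Finset.sum_congr rfl fun k _ => by rw [sum_z k, mul_one]]
              exact hw1
            rw [this, one_mul]
    refine final.trans (le_of_eq ?_)
    exact Finset.prod_congr rfl fun k _ => by rw [one_div]


/-- iterated mixed-norm Hölder inequality -/
lemma mixed_holder {N : ℕ} {κ : Type*} [Fintype κ] :
    ∀ {n : ℕ} (r : κ → Fin n → ℝ), (∀ k i, 0 < r k i) → (∀ i, ∑ k, (r k i)⁻¹ = 1) →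
      ∀ (g : κ → (Fin n → Fin N) → ℝ≥0),
      ∑ j, ∏ k, g k j ≤ ∏ k, Mnorm (r k) (g k) := by
  intro n
  induction n with
  | zero =>
    intro r hr hsum g
    rw [Fintype.sum_unique]
    exact le_of_eq (Finset.prod_congr rfl fun k _ => (Mnorm_zero _ _).symm)
  | succ n ih =>
    intro r hr hsum g
    rw [sum_pi_succ (fun j => ∏ k, g k j)]
    have step1 : ∀ j' : Fin n → Fin N,
        ∑ a, ∏ k, g k (Fin.cons a j')
          ≤ ∏ k, (∑ a, g k (Fin.cons a j') ^ (r k 0)) ^ (1/(r k 0)) := by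
      intro j'
      exact flat_holder (fun k => r k 0) (fun k => hr k 0) (hsum 0) _
    calc ∑ j' : Fin n → Fin N, ∑ a, ∏ k, g k (Fin.cons a j')
        ≤ ∑ j' : Fin n → Fin N, ∏ k, (∑ a, g k (Fin.cons a j') ^ (r k 0)) ^ (1/(r k 0)) :=
          Finset.sum_le_sum fun j' _ => step1 j'
      _ ≤ ∏ k, Mnorm (fun i => r k i.succ)
            (fun j' => (∑ a, g k (Fin.cons a j') ^ (r k 0)) ^ (1/(r k 0))) :=
          ih (fun k i => r k i.succ) (fun k i => hr k i.succ) (fun i => hsum i.succ) _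
      _ = ∏ k, Mnorm (r k) (g k) :=
          Finset.prod_congr rfl fun k _ => (Mnorm_succ _ _).symm

/-- generalized finite Minkowski inequality -/
lemma minkowski_sum {α β : Type*} [Fintype α] [Fintype β] {s : ℝ} (hs : 1 ≤ s)
    (H : α → β → ℝ≥0) :
    (∑ b, (∑ a, H a b) ^ s) ^ (1/s) ≤ ∑ a, (∑ b, (H a b) ^ s) ^ (1/s) := by
  have hs0 : s ≠ 0 := by positivity
  classical
  have main : ∀ t : Finset α,
      (∑ b, (∑ a ∈ t, H a b) ^ s) ^ (1/s) ≤ ∑ a ∈ t, (∑ b, (H a b) ^ s) ^ (1/s) := by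
    intro t
    induction t using Finset.induction_on with
    | empty => simp [NNReal.zero_rpow, hs0, one_div_ne_zero]
    | @insert a t ha iht =>
      have hsplit : ∀ b, ∑ a' ∈ insert a t, H a' b = H a b + ∑ a' ∈ t, H a' b := by
        intro b; rw [Finset.sum_insert ha]
      calc (∑ b, (∑ a' ∈ insert a t, H a' b) ^ s) ^ (1/s)
          = (∑ b, (H a b + ∑ a' ∈ t, H a' b) ^ s) ^ (1/s) := by
            congr 1; exact Finset.sum_congr rfl fun b _ => by rw [hsplit b]
        _ ≤ (∑ b, (H a b) ^ s) ^ (1/s) + (∑ b, (∑ a' ∈ t, H a' b) ^ s) ^ (1/s) :=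
            NNReal.Lp_add_le Finset.univ _ _ hs
        _ ≤ (∑ b, (H a b) ^ s) ^ (1/s) + ∑ a' ∈ t, (∑ b, (H a' b) ^ s) ^ (1/s) := by
            exact add_le_add le_rfl iht
        _ = ∑ a' ∈ insert a t, (∑ b, (H a' b) ^ s) ^ (1/s) := by
            rw [Finset.sum_insert ha]
  exact main Finset.univ

lemma cons_insertNth {N n : ℕ} (k : Fin (n+1)) (b a : Fin N) (j : Fin n → Fin N) :
    (k.succ).insertNth b (Fin.cons a j) = (Fin.cons a (k.insertNth b j) : Fin (n+2) → Fin N) := by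
  rw [Fin.insertNth_eq_iff]
  constructor
  · simp
  · funext u
    refine Fin.cases ?_ ?_ u
    · simp [Fin.removeNth]
    · intro v
      simp [Fin.removeNth, Fin.succ_succAbove_succ]

/-- the mixed norm: ℓ^q outside, ℓ² inside on coordinate `k`. -/
noncomputable def Tnorm {N n : ℕ} (q : ℝ) (k : Fin (n+1)) (A : (Fin (n+1) → Fin N) → ℝ≥0) : ℝ≥0 :=
  (∑ jh : Fin n → Fin N, (∑ a, A (k.insertNth a jh) ^ (2:ℝ)) ^ (q/2)) ^ (1/q)

/-- Blei-type estimate: the nested mixed norm with exponent 2 at position `k` and `q`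
elsewhere is dominated by `Tnorm`. -/
lemma Mnorm_le_T {N : ℕ} {q : ℝ} (hq0 : 0 < q) (hq2 : q ≤ 2) :
    ∀ {n : ℕ} (k : Fin (n+1)) (A : (Fin (n+1) → Fin N) → ℝ≥0),
    Mnorm (fun i => if i = k then 2 else q) A ≤ Tnorm q k A := by
  have hqne : q ≠ 0 := hq0.ne'
  intro n
  induction n with
  | zero =>
    intro k A
    have hk : k = 0 := Fin.fin_one_eq_zero k
    subst hk
    rw [Mnorm_succ, Mnorm_zero, Tnorm]
    have he0 : (if (0 : Fin 1) = 0 then (2:ℝ) else q) = 2 := if_pos rfl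
    rw [he0]
    apply le_of_eq
    have hR : ∀ F : (Fin 0 → Fin N) → ℝ≥0, (∑ jh, F jh) = F default := fun F =>
      Fintype.sum_unique F
    have hexp : q/2 * (1/q) = 1/2 := by field_simp
    have hbase : (∑ a, A (Fin.cons a (default : Fin 0 → Fin N)) ^ (2:ℝ))
        = ∑ a, A ((0 : Fin 1).insertNth a (default : Fin 0 → Fin N)) ^ (2:ℝ) :=
      Finset.sum_congr rfl fun a _ => by rw [Fin.insertNth_zero']
    rw [hR (fun jh => (∑ a, A ((0:Fin 1).insertNth a jh) ^ (2:ℝ)) ^ (q/2)),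
      ← NNReal.rpow_mul, hexp, hbase]
  | succ n ih =>
    intro k A
    refine Fin.cases ?_ ?_ k
    · -- k = 0
      rw [Mnorm_succ]
      have he0 : (if (0 : Fin (n+2)) = 0 then (2:ℝ) else q) = 2 := if_pos rfl
      have hesucc : (fun i : Fin (n+1) =>
          if i.succ = (0 : Fin (n+2)) then (2:ℝ) else q) = fun _ => q := by
        funext i; rw [if_neg (Fin.succ_ne_zero i)]
      rw [he0, hesucc, Mnorm_const hqne]
      rw [Tnorm]
      apply le_of_eq
      congr 1
      refine Finset.sum_congr rfl fun j' _ => ?_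
      rw [← NNReal.rpow_mul]
      rw [show (1:ℝ)/2 * q = q/2 by ring]
      congr 1
      refine Finset.sum_congr rfl fun a _ => ?_
      rw [Fin.insertNth_zero']
    · -- k = k'.succ
      intro k'
      rw [Mnorm_succ]
      have he0 : (if (0 : Fin (n+2)) = k'.succ then (2:ℝ) else q) = q :=
        if_neg (Fin.succ_ne_zero k').symm
      have hesucc : (fun i : Fin (n+1) => if i.succ = k'.succ then (2:ℝ) else q)
          = fun i => if i = k' then (2:ℝ) else q := by
        funext i
        by_cases h : i = k'
        · rw [if_pos (by rw [h]), if_pos h]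
        · rw [if_neg (fun hh => h (Fin.succ_inj.mp hh)), if_neg h]
      rw [he0, hesucc]
      set A0 : (Fin (n+1) → Fin N) → ℝ≥0 :=
        fun j' => (∑ a, A (Fin.cons a j') ^ q) ^ (1/q) with hA0
      calc Mnorm (fun i => if i = k' then (2:ℝ) else q) A0
          ≤ Tnorm q k' A0 := ih k' A0
        _ ≤ Tnorm q k'.succ A := ?_
      rw [Tnorm, Tnorm]
      apply NNReal.rpow_le_rpow _ (by positivity)
      rw [sum_pi_succ (N := N) (n := n)
        (fun jh => (∑ a, A (k'.succ.insertNth a jh) ^ (2:ℝ)) ^ (q/2))]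
      apply Finset.sum_le_sum
      intro jh' _
      set G : Fin N → Fin N → ℝ≥0 :=
        fun a b => A (k'.succ.insertNth b (Fin.cons a jh')) ^ q with hG
      have hs1 : (1:ℝ) ≤ 2/q := by
        rw [le_div_iff₀ hq0]; linarith
      have hs1' : (2:ℝ)/q ≠ 0 := by positivity
      have e1 : ∀ b, A0 (k'.insertNth b jh') ^ (2:ℝ) = (∑ a, G a b) ^ ((2:ℝ)/q) := by
        intro b
        simp only [hA0, hG]
        rw [← NNReal.rpow_mul, show (1:ℝ)/q * 2 = 2/q by ring]
        congr 1
        exact Finset.sum_congr rfl fun a _ => by rw [cons_insertNth]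
      have e2 : ∀ a b, A (k'.succ.insertNth b (Fin.cons a jh')) ^ (2:ℝ)
          = (G a b) ^ ((2:ℝ)/q) := by
        intro a b
        simp only [hG]
        rw [← NNReal.rpow_mul]
        congr 1
        field_simp
      calc (∑ b, A0 (k'.insertNth b jh') ^ (2:ℝ)) ^ (q/2)
          = (∑ b, (∑ a, G a b) ^ ((2:ℝ)/q)) ^ (1/((2:ℝ)/q)) := by
            rw [one_div_div]
            congr 1
            exact Finset.sum_congr rfl fun b _ => e1 b
        _ ≤ ∑ a, (∑ b, (G a b) ^ ((2:ℝ)/q)) ^ (1/((2:ℝ)/q)) := minkowski_sum hs1 G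
        _ = ∑ a, (∑ b, A (k'.succ.insertNth b (Fin.cons a jh')) ^ (2:ℝ)) ^ (q/2) := by
            refine Finset.sum_congr rfl fun a _ => ?_
            rw [one_div_div]
            congr 1
            exact Finset.sum_congr rfl fun b _ => (e2 a b).symm


variable {𝕜 : Type*} [RCLike 𝕜]

section weak
variable {E : Type*} [NormedAddCommGroup E] [NormedSpace 𝕜 E] {m : ℕ}

lemma weakNorm_nonneg (x : Fin m → E) : 0 ≤ weakNorm 𝕜 1 x :=
  Real.iSup_nonneg fun φ => by positivity

lemma weakNorm_bddAbove (x : Fin m → E) :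
    BddAbove (Set.range fun ψ : {ψ : E →L[𝕜] 𝕜 // ‖ψ‖ ≤ 1} =>
      (∑ j, ‖ψ.1 (x j)‖ ^ (1:ℝ)) ^ (1/(1:ℝ))) := by
  refine ⟨∑ j, ‖x j‖, ?_⟩
  rintro - ⟨ψ, rfl⟩
  simp only [Real.rpow_one, one_div_one]
  refine Finset.sum_le_sum fun j _ => ?_
  calc ‖ψ.1 (x j)‖ ≤ ‖ψ.1‖ * ‖x j‖ := ψ.1.le_opNorm _
    _ ≤ 1 * ‖x j‖ := by
        exact mul_le_mul_of_nonneg_right ψ.2 (norm_nonneg _)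
    _ = ‖x j‖ := one_mul _

lemma sum_norm_le_weak (x : Fin m → E) (φ : E →L[𝕜] 𝕜) :
    ∑ a, ‖φ (x a)‖ ≤ ‖φ‖ * weakNorm 𝕜 1 x := by
  by_cases hφ : φ = 0
  · simp [hφ]
  have hn : 0 < ‖φ‖ := norm_pos_iff.mpr hφ
  set c : 𝕜 := ((‖φ‖⁻¹ : ℝ) : 𝕜) with hc
  have hcnorm : ‖c‖ = ‖φ‖⁻¹ := by
    rw [hc, RCLike.norm_ofReal, abs_of_nonneg (by positivity)]
  have hψ : ‖c • φ‖ ≤ 1 := by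
    calc ‖c • φ‖ ≤ ‖c‖ * ‖φ‖ := norm_smul_le c φ
      _ = 1 := by rw [hcnorm, inv_mul_cancel₀ hn.ne']
  have hval : (∑ j, ‖(c • φ) (x j)‖ ^ (1:ℝ)) ^ (1/(1:ℝ)) = ‖φ‖⁻¹ * ∑ j, ‖φ (x j)‖ := by
    simp only [Real.rpow_one, one_div_one]
    rw [Finset.mul_sum]
    refine Finset.sum_congr rfl fun j _ => ?_
    rw [ContinuousLinearMap.smul_apply, norm_smul, hcnorm]
  have hle : (∑ j, ‖(c • φ) (x j)‖ ^ (1:ℝ)) ^ (1/(1:ℝ)) ≤ weakNorm 𝕜 1 x :=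
    le_ciSup (weakNorm_bddAbove x) (⟨c • φ, hψ⟩ : {ψ : E →L[𝕜] 𝕜 // ‖ψ‖ ≤ 1})
  rw [hval] at hle
  calc ∑ a, ‖φ (x a)‖ = ‖φ‖ * (‖φ‖⁻¹ * ∑ a, ‖φ (x a)‖) := by
        rw [← mul_assoc, mul_inv_cancel₀ hn.ne', one_mul]
    _ ≤ ‖φ‖ * weakNorm 𝕜 1 x := mul_le_mul_of_nonneg_left hle hn.le

lemma norm_sign_combo_le_weak (x : Fin m → E) (ε : Fin m → Bool) :
    ‖∑ j, ((sg (ε j) : ℝ) : 𝕜) • x j‖ ≤ weakNorm 𝕜 1 x := by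
  set y := ∑ j, ((sg (ε j) : ℝ) : 𝕜) • x j with hy
  obtain ⟨g, hg1, hgy⟩ := exists_dual_vector'' 𝕜 y
  have h1 : ‖y‖ = ‖g y‖ := by
    rw [hgy, RCLike.norm_ofReal, abs_of_nonneg (norm_nonneg _)]
  have h2 : g y = ∑ j, ((sg (ε j) : ℝ) : 𝕜) * g (x j) := by
    rw [hy, map_sum]
    exact Finset.sum_congr rfl fun j _ => by rw [map_smul, smul_eq_mul]
  calc ‖y‖ = ‖∑ j, ((sg (ε j) : ℝ) : 𝕜) * g (x j)‖ := by rw [h1, h2]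
    _ ≤ ∑ j, ‖((sg (ε j) : ℝ) : 𝕜) * g (x j)‖ := norm_sum_le _ _
    _ = ∑ j, ‖g (x j)‖ := Finset.sum_congr rfl fun j _ => by
        rw [norm_mul, norm_sg, one_mul]
    _ ≤ ‖g‖ * weakNorm 𝕜 1 x := sum_norm_le_weak x g
    _ ≤ 1 * weakNorm 𝕜 1 x :=
        mul_le_mul_of_nonneg_right hg1 (weakNorm_nonneg x)
    _ = weakNorm 𝕜 1 x := one_mul _

end weak

section slot
variable {n : ℕ} {E : Fin (n+1) → Type*} [∀ i, NormedAddCommGroup (E i)]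
  [∀ i, NormedSpace 𝕜 (E i)]

lemma insertNth_update_succAbove [DecidableEq (Fin n)] (k : Fin (n+1)) (y : E k)
    (z : ∀ i : Fin n, E (k.succAbove i)) (i : Fin n) (w : E (k.succAbove i)) :
    k.insertNth y (Function.update z i w)
      = Function.update (k.insertNth y z) (k.succAbove i) w := by
  funext t
  refine Fin.succAboveCases k ?_ ?_ t
  · rw [Fin.insertNth_apply_same,
      Function.update_of_ne (Fin.succAbove_ne k i).symm,
      Fin.insertNth_apply_same]
  · intro u
    rw [Fin.insertNth_apply_succAbove]
    by_cases h : u = i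
    · subst h
      rw [Function.update_self, Function.update_self]
    · rw [Function.update_of_ne h,
        Function.update_of_ne (fun hh => h (Fin.succAbove_right_injective hh)),
        Fin.insertNth_apply_succAbove]

lemma insertNth_eq_update (k : Fin (n+1)) (y : E k) (z : ∀ i : Fin n, E (k.succAbove i)) :
    k.insertNth y z = Function.update (k.insertNth 0 z) k y :=
  (Fin.update_insertNth k 0 y z).symm

lemma norm_prod_insertNth (k : Fin (n+1)) (y : E k) (z : ∀ i : Fin n, E (k.succAbove i)) :
    ∏ t, ‖k.insertNth y z t‖ = ‖y‖ * ∏ i, ‖z i‖ := by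
  rw [Fin.prod_univ_succAbove (fun t => ‖k.insertNth y z t‖) k]
  congr 1
  · rw [Fin.insertNth_apply_same]
  · exact Finset.prod_congr rfl fun i _ => by rw [Fin.insertNth_apply_succAbove]

/-- fixing all slots but `k` of a continuous multilinear map -/
noncomputable def slotCLM (U : ContinuousMultilinearMap 𝕜 E 𝕜) (k : Fin (n+1))
    (z : ∀ i : Fin n, E (k.succAbove i)) : E k →L[𝕜] 𝕜 :=
  LinearMap.mkContinuous
    { toFun := fun y => U (k.insertNth y z)
      map_add' := fun y₁ y₂ => by
        show U (k.insertNth (y₁ + y₂) z) = U (k.insertNth y₁ z) + U (k.insertNth y₂ z)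
        rw [insertNth_eq_update k (y₁ + y₂), insertNth_eq_update k y₁,
          insertNth_eq_update k y₂, U.map_update_add]
      map_smul' := fun c y => by
        show U (k.insertNth (c • y) z) = c • U (k.insertNth y z)
        rw [insertNth_eq_update k (c • y), insertNth_eq_update k y, U.map_update_smul] }
    (‖U‖ * ∏ i, ‖z i‖)
    (fun y => by
      calc ‖U (k.insertNth y z)‖ ≤ ‖U‖ * ∏ t, ‖k.insertNth y z t‖ := U.le_opNorm _
        _ = (‖U‖ * ∏ i, ‖z i‖) * ‖y‖ := by rw [norm_prod_insertNth]; ring)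

lemma slotCLM_apply (U : ContinuousMultilinearMap 𝕜 E 𝕜) (k : Fin (n+1))
    (z : ∀ i : Fin n, E (k.succAbove i)) (y : E k) :
    slotCLM U k z y = U (k.insertNth y z) := rfl

lemma slotCLM_norm (U : ContinuousMultilinearMap 𝕜 E 𝕜) (k : Fin (n+1))
    (z : ∀ i : Fin n, E (k.succAbove i)) :
    ‖slotCLM U k z‖ ≤ ‖U‖ * ∏ i, ‖z i‖ :=
  LinearMap.mkContinuous_norm_le _ (by positivity) _

/-- fixing slot `k` of a continuous multilinear map -/
noncomputable def fixSlot (U : ContinuousMultilinearMap 𝕜 E 𝕜) (k : Fin (n+1)) (y : E k) :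
    ContinuousMultilinearMap 𝕜 (fun i : Fin n => E (k.succAbove i)) 𝕜 :=
  MultilinearMap.mkContinuous
    { toFun := fun z => U (k.insertNth y z)
      map_update_add' := fun z i a b => by
        show U (k.insertNth y (Function.update z i (a + b)))
            = U (k.insertNth y (Function.update z i a))
              + U (k.insertNth y (Function.update z i b))
        rw [insertNth_update_succAbove, insertNth_update_succAbove,
          insertNth_update_succAbove, U.map_update_add]
      map_update_smul' := fun z i c a => by
        show U (k.insertNth y (Function.update z i (c • a)))
            = c • U (k.insertNth y (Function.update z i a))
        rw [insertNth_update_succAbove, insertNth_update_succAbove, U.map_update_smul] }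
    (‖U‖ * ‖y‖)
    (fun z => by
      calc ‖U (k.insertNth y z)‖ ≤ ‖U‖ * ∏ t, ‖k.insertNth y z t‖ := U.le_opNorm _
        _ = (‖U‖ * ‖y‖) * ∏ i, ‖z i‖ := by rw [norm_prod_insertNth]; ring)

lemma fixSlot_apply (U : ContinuousMultilinearMap 𝕜 E 𝕜) (k : Fin (n+1)) (y : E k)
    (z : ∀ i : Fin n, E (k.succAbove i)) :
    fixSlot U k y z = U (k.insertNth y z) := by
  simp only [fixSlot, MultilinearMap.coe_mkContinuous]
  rfl

lemma fixSlot_norm (U : ContinuousMultilinearMap 𝕜 E 𝕜) (k : Fin (n+1)) (y : E k) :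
    ‖fixSlot U k y‖ ≤ ‖U‖ * ‖y‖ :=
  MultilinearMap.mkContinuous_norm_le _ (by positivity) _

end slot

/-! ### NNReal bridges -/

noncomputable def wk (𝕜 : Type*) [RCLike 𝕜] {E : Type*} [NormedAddCommGroup E]
    [NormedSpace 𝕜 E] {m : ℕ} (x : Fin m → E) : ℝ≥0 := (weakNorm 𝕜 1 x).toNNReal

section bridge
variable {𝕜 : Type*} [RCLike 𝕜] {E : Type*} [NormedAddCommGroup E] [NormedSpace 𝕜 E] {m : ℕ}

lemma wk_coe (x : Fin m → E) : ((wk 𝕜 x : ℝ≥0) : ℝ) = weakNorm 𝕜 1 x :=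
  Real.coe_toNNReal _ (weakNorm_nonneg (𝕜 := 𝕜) x)

lemma sum_nnnorm_le_wk (x : Fin m → E) (φ : E →L[𝕜] 𝕜) :
    ∑ a, ‖φ (x a)‖₊ ≤ ‖φ‖₊ * wk 𝕜 x := by
  rw [← NNReal.coe_le_coe, NNReal.coe_sum, NNReal.coe_mul, wk_coe]
  simpa using sum_norm_le_weak x φ

lemma nnnorm_combo_le_wk (x : Fin m → E) (ε : Fin m → Bool) :
    ‖∑ j, ((sg (ε j) : ℝ) : 𝕜) • x j‖₊ ≤ wk 𝕜 x := by
  rw [← NNReal.coe_le_coe, wk_coe]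
  simpa using norm_sign_combo_le_weak x ε

lemma khinchineNN {N : ℕ} (c : Fin N → 𝕜) :
    (∑ a, ‖c a‖₊ ^ (2:ℝ))
      ≤ 3 * ((((2:ℝ≥0))^N)⁻¹ * ∑ ε : Fin N → Bool, ‖∑ j, ((sg (ε j) : ℝ) : 𝕜) • c j‖₊)
          ^ (2:ℝ) := by
  have hsm : ∀ (ε : Fin N → Bool) (j : Fin N),
      ((sg (ε j) : ℝ) : 𝕜) • c j = sg (ε j) • c j := fun ε j => by
    rw [smul_eq_mul, ← RCLike.real_smul_eq_coe_mul]
  have h2 : ∀ x : ℝ≥0, ((x ^ (2:ℝ) : ℝ≥0) : ℝ) = (x:ℝ)^2 := fun x => by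
    rw [NNReal.coe_rpow, show (2:ℝ) = ((2:ℕ):ℝ) by norm_num, Real.rpow_natCast]
  rw [← NNReal.coe_le_coe]
  calc ((∑ a, ‖c a‖₊ ^ (2:ℝ) : ℝ≥0) : ℝ)
      = ∑ a, ‖c a‖^2 := by
        rw [NNReal.coe_sum]
        exact Finset.sum_congr rfl fun a _ => by rw [h2, coe_nnnorm]
    _ ≤ 3 * (((2:ℝ)^N)⁻¹ * ∑ ε : Fin N → Bool, ‖∑ j, sg (ε j) • c j‖)^2 := khinchine c
    _ = ((3 * ((((2:ℝ≥0))^N)⁻¹ * ∑ ε : Fin N → Bool,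
          ‖∑ j, ((sg (ε j) : ℝ) : 𝕜) • c j‖₊) ^ (2:ℝ) : ℝ≥0) : ℝ) := by
        rw [NNReal.coe_mul, h2, NNReal.coe_mul, NNReal.coe_inv, NNReal.coe_pow, NNReal.coe_sum]
        have hco : ∀ ε : Fin N → Bool,
            ((‖∑ j, ((sg (ε j) : ℝ) : 𝕜) • c j‖₊ : ℝ≥0) : ℝ)
              = ‖∑ j, sg (ε j) • c j‖ := fun ε => by
          rw [coe_nnnorm]
          congr 1
          exact Finset.sum_congr rfl fun j _ => hsm ε j
        rw [Finset.sum_congr rfl fun ε _ => hco ε]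
        norm_num

end bridge

/-! ### The master induction -/

theorem master (𝕜 : Type*) [RCLike 𝕜] :
    ∀ (n : ℕ) (E : Fin (n+1) → Type) [∀ i, NormedAddCommGroup (E i)]
      [∀ i, NormedSpace 𝕜 (E i)] [∀ i, CompleteSpace (E i)]
      (U : ContinuousMultilinearMap 𝕜 E 𝕜) (N : ℕ) (x : ∀ k, Fin N → E k),
      (∑ j : Fin (n+1) → Fin N, ‖U (fun k => x k (j k))‖₊ ^ (2*((n:ℝ)+1)/((n:ℝ)+2)))
          ^ (((n:ℝ)+2)/(2*((n:ℝ)+1)))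
        ≤ 3^(n+1) * ‖U‖₊ * ∏ k, wk 𝕜 (x k) := by
  intro n
  induction n with
  | zero =>
    intro E _ _ _ U N x
    have he1 : 2*((((0:ℕ)):ℝ)+1)/((((0:ℕ)):ℝ)+2) = 1 := by norm_num
    have he2 : ((((0:ℕ)):ℝ)+2)/(2*((((0:ℕ)):ℝ)+1)) = 1 := by norm_num
    rw [he1, he2]
    simp only [NNReal.rpow_one]
    have hsum : ∑ j : Fin (0+1) → Fin N, ‖U (fun k => x k (j k))‖₊
        = ∑ a : Fin N, ‖U (fun k => x k a)‖₊ :=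
      (Equiv.sum_comp ((Equiv.funUnique (Fin 1) (Fin N)).symm)
        (fun j : Fin 1 → Fin N => ‖U (fun k => x k (j k))‖₊)).symm
    rw [hsum]
    have happ : ∀ a : Fin N, (fun k : Fin 1 => x k a)
        = (0 : Fin 1).insertNth (x 0 a) default := by
      intro a; funext k
      have hk : k = 0 := Fin.fin_one_eq_zero k
      subst hk
      rw [Fin.insertNth_apply_same]
    have hψn : ‖slotCLM U 0 (default : ∀ i : Fin 0, E ((0:Fin 1).succAbove i))‖₊ ≤ ‖U‖₊ := by
      rw [← NNReal.coe_le_coe, coe_nnnorm, coe_nnnorm]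
      have := slotCLM_norm U 0 (default : ∀ i : Fin 0, E ((0:Fin 1).succAbove i))
      simpa using this
    calc ∑ a : Fin N, ‖U (fun k => x k a)‖₊
        = ∑ a : Fin N, ‖slotCLM U 0 (default : ∀ i : Fin 0, E ((0:Fin 1).succAbove i))
            (x 0 a)‖₊ := by
          refine Finset.sum_congr rfl fun a _ => ?_
          rw [slotCLM_apply, ← happ a]
      _ ≤ ‖slotCLM U 0 (default : ∀ i : Fin 0, E ((0:Fin 1).succAbove i))‖₊ * wk 𝕜 (x 0) :=
          sum_nnnorm_le_wk (x 0) _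
      _ ≤ ‖U‖₊ * wk 𝕜 (x 0) := mul_le_mul_left hψn _
      _ ≤ 3^(0+1) * ‖U‖₊ * ∏ k, wk 𝕜 (x k) := by
          rw [Fin.prod_univ_one]
          calc ‖U‖₊ * wk 𝕜 (x 0) = 1 * (‖U‖₊ * wk 𝕜 (x 0)) := (one_mul _).symm
            _ ≤ 3^(0+1) * (‖U‖₊ * wk 𝕜 (x 0)) := mul_le_mul_left (by norm_num) _
            _ = 3^(0+1) * ‖U‖₊ * wk 𝕜 (x 0) := (mul_assoc _ _ _).symm
  | succ n ih =>
    intro E instG instS instC U N x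
    have hn0 : (0:ℝ) ≤ (n:ℝ) := Nat.cast_nonneg n
    set q : ℝ := 2*((n:ℝ)+1)/((n:ℝ)+2) with hqdef
    have hq0 : 0 < q := by rw [hqdef]; positivity
    have hq1 : 1 ≤ q := by
      rw [hqdef, le_div_iff₀ (by positivity)]
      linarith
    have hq2 : q ≤ 2 := by
      rw [hqdef, div_le_iff₀ (by positivity)]
      linarith
    have hqne : q ≠ 0 := hq0.ne'
    set s : ℝ := 2/((n:ℝ)+3) with hsdef
    have hs0 : 0 < s := by rw [hsdef]; positivity
    set P : ℝ := 2*((n:ℝ)+2)/((n:ℝ)+3) with hPdef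
    have hP0 : 0 < P := by rw [hPdef]; positivity
    have hgoal_exp1 : 2*((((n+1:ℕ)):ℝ)+1)/((((n+1:ℕ)):ℝ)+2) = P := by
      rw [hPdef]; push_cast; ring
    have hgoal_exp2 : ((((n+1:ℕ)):ℝ)+2)/(2*((((n+1:ℕ)):ℝ)+1)) = 1/P := by
      rw [hPdef, one_div_div]; push_cast; ring
    rw [hgoal_exp1, hgoal_exp2]
    set A : (Fin (n+2) → Fin N) → ℝ≥0 := fun j => ‖U (fun k => x k (j k))‖₊ with hA
    -- ### Step 2 : bound on each mixed norm
    have step2 : ∀ k : Fin (n+2),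
        Tnorm q k A ≤ (3:ℝ≥0)^((1:ℝ)/2) * 3^(n+1) * (‖U‖₊ * ∏ t, wk 𝕜 (x t)) := by
      intro k
      set y : (Fin N → Bool) → E k := fun ε => ∑ j, ((sg (ε j) : ℝ) : 𝕜) • x k j with hy
      have hAins : ∀ (a : Fin N) (jh : Fin (n+1) → Fin N),
          A (k.insertNth a jh)
            = ‖slotCLM U k (fun i => x (k.succAbove i) (jh i)) (x k a)‖₊ := by
        intro a jh
        have harg : (fun t => x t ((k.insertNth a jh : Fin (n+2) → Fin N) t))
            = k.insertNth (x k a) (fun i => x (k.succAbove i) (jh i)) := by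
          funext t
          refine Fin.succAboveCases k ?_ ?_ t
          · rw [Fin.insertNth_apply_same, Fin.insertNth_apply_same]
          · intro u
            rw [Fin.insertNth_apply_succAbove, Fin.insertNth_apply_succAbove]
        simp only [hA]
        rw [slotCLM_apply, harg]
      -- Khinchine bound pointwise in jh
      have hkh : ∀ jh : Fin (n+1) → Fin N, (∑ a, A (k.insertNth a jh) ^ (2:ℝ))
          ≤ 3 * ((((2:ℝ≥0))^N)⁻¹
              * ∑ ε, ‖slotCLM U k (fun i => x (k.succAbove i) (jh i)) (y ε)‖₊) ^ (2:ℝ) := by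
        intro jh
        have hyψ : ∀ ε : Fin N → Bool,
            (∑ j, ((sg (ε j) : ℝ) : 𝕜)
                • slotCLM U k (fun i => x (k.succAbove i) (jh i)) (x k j))
              = slotCLM U k (fun i => x (k.succAbove i) (jh i)) (y ε) := by
          intro ε
          rw [hy, map_sum]
          exact Finset.sum_congr rfl fun j _ => (map_smul _ _ _).symm
        have h2 := khinchineNN
          (c := fun a => slotCLM U k (fun i => x (k.succAbove i) (jh i)) (x k a))
        rw [show (∑ ε : Fin N → Bool, ‖∑ j, ((sg (ε j) : ℝ) : 𝕜)
            • slotCLM U k (fun i => x (k.succAbove i) (jh i)) (x k j)‖₊)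
            = ∑ ε : Fin N → Bool,
              ‖slotCLM U k (fun i => x (k.succAbove i) (jh i)) (y ε)‖₊ from
          Finset.sum_congr rfl fun ε _ => by rw [hyψ ε]] at h2
        rw [show (∑ a, A (k.insertNth a jh) ^ (2:ℝ))
            = ∑ a, ‖slotCLM U k (fun i => x (k.succAbove i) (jh i)) (x k a)‖₊ ^ (2:ℝ) from
          Finset.sum_congr rfl fun a _ => by rw [hAins a jh]]
        exact h2
      -- per-ε inner bound via the inductive hypothesis
      have hper : ∀ ε : Fin N → Bool,
          (∑ jh : Fin (n+1) → Fin N,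
              ‖slotCLM U k (fun i => x (k.succAbove i) (jh i)) (y ε)‖₊ ^ q) ^ (1/q)
            ≤ 3^(n+1) * (‖U‖₊ * wk 𝕜 (x k)) * ∏ i, wk 𝕜 (x (k.succAbove i)) := by
        intro ε
        have hq_inv : ((n:ℝ)+2)/(2*((n:ℝ)+1)) = 1/q := by
          rw [hqdef, one_div_div]
        have hihb := ih (fun i => E (k.succAbove i)) (fixSlot U k (y ε)) N
          (fun i => x (k.succAbove i))
        rw [hq_inv] at hihb
        have heq : ∀ jh : Fin (n+1) → Fin N,
            ‖slotCLM U k (fun i => x (k.succAbove i) (jh i)) (y ε)‖₊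
              = ‖fixSlot U k (y ε) (fun i => x (k.succAbove i) (jh i))‖₊ := by
          intro jh
          rw [slotCLM_apply, fixSlot_apply]
        calc (∑ jh : Fin (n+1) → Fin N,
              ‖slotCLM U k (fun i => x (k.succAbove i) (jh i)) (y ε)‖₊ ^ q) ^ (1/q)
            = (∑ jh : Fin (n+1) → Fin N,
              ‖fixSlot U k (y ε) (fun i => x (k.succAbove i) (jh i))‖₊ ^ q) ^ (1/q) := by
              congr 1 <;> exact Finset.sum_congr rfl fun jh _ => by rw [heq jh]
          _ ≤ 3^(n+1) * ‖fixSlot U k (y ε)‖₊ * ∏ i, wk 𝕜 (x (k.succAbove i)) := hihb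
          _ ≤ 3^(n+1) * (‖U‖₊ * wk 𝕜 (x k)) * ∏ i, wk 𝕜 (x (k.succAbove i)) := by
              refine mul_le_mul_left (mul_le_mul_right ?_ _) _
              calc ‖fixSlot U k (y ε)‖₊ ≤ ‖U‖₊ * ‖y ε‖₊ := by
                    rw [← NNReal.coe_le_coe]
                    push_cast
                    exact fixSlot_norm U k (y ε)
                _ ≤ ‖U‖₊ * wk 𝕜 (x k) :=
                    mul_le_mul_right (by rw [hy]; exact nnnorm_combo_le_wk (x k) ε) _
      -- assemble step2
      have hprodsplit : (∏ t, wk 𝕜 (x t)) = wk 𝕜 (x k) * ∏ i, wk 𝕜 (x (k.succAbove i)) :=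
        Fin.prod_univ_succAbove (fun t => wk 𝕜 (x t)) k
      have hcard : ((Finset.univ : Finset (Fin N → Bool)).card : ℝ≥0) = 2^N := by
        rw [Finset.card_univ]
        rw [show Fintype.card (Fin N → Bool) = 2^N by
          rw [Fintype.card_fun, Fintype.card_bool, Fintype.card_fin]]
        push_cast
        rfl
      calc Tnorm q k A
          ≤ (∑ jh : Fin (n+1) → Fin N, ((3:ℝ≥0) * ((((2:ℝ≥0))^N)⁻¹
              * ∑ ε, ‖slotCLM U k (fun i => x (k.succAbove i) (jh i)) (y ε)‖₊) ^ (2:ℝ))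
                ^ (q/2)) ^ (1/q) := by
            rw [Tnorm]
            apply NNReal.rpow_le_rpow _ (by positivity)
            exact Finset.sum_le_sum fun jh _ =>
              NNReal.rpow_le_rpow (hkh jh) (by positivity)
        _ = (3:ℝ≥0)^((1:ℝ)/2) * (∑ jh : Fin (n+1) → Fin N, ((((2:ℝ≥0))^N)⁻¹
              * ∑ ε, ‖slotCLM U k (fun i => x (k.succAbove i) (jh i)) (y ε)‖₊) ^ q)
                ^ (1/q) := by
            rw [show (∑ jh : Fin (n+1) → Fin N, ((3:ℝ≥0) * ((((2:ℝ≥0))^N)⁻¹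
                * ∑ ε, ‖slotCLM U k (fun i => x (k.succAbove i) (jh i)) (y ε)‖₊) ^ (2:ℝ))
                  ^ (q/2))
                = (3:ℝ≥0)^(q/2) * ∑ jh : Fin (n+1) → Fin N, ((((2:ℝ≥0))^N)⁻¹
                * ∑ ε, ‖slotCLM U k (fun i => x (k.succAbove i) (jh i)) (y ε)‖₊) ^ q from by
              rw [Finset.mul_sum]
              refine Finset.sum_congr rfl fun jh _ => ?_
              rw [NNReal.mul_rpow, ← NNReal.rpow_mul]
              congr 2
              field_simp]
            rw [NNReal.mul_rpow, ← NNReal.rpow_mul]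
            congr 2
            field_simp
        _ ≤ (3:ℝ≥0)^((1:ℝ)/2) * ∑ ε : Fin N → Bool, ((((2:ℝ≥0))^N)⁻¹
              * (∑ jh : Fin (n+1) → Fin N,
                ‖slotCLM U k (fun i => x (k.succAbove i) (jh i)) (y ε)‖₊ ^ q) ^ (1/q)) := by
            refine mul_le_mul_right ?_ _
            have hmink := minkowski_sum (α := Fin N → Bool) (β := Fin (n+1) → Fin N) hq1
              (H := fun ε jh => (((2:ℝ≥0))^N)⁻¹
                * ‖slotCLM U k (fun i => x (k.succAbove i) (jh i)) (y ε)‖₊)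
            calc (∑ jh : Fin (n+1) → Fin N, ((((2:ℝ≥0))^N)⁻¹
                  * ∑ ε, ‖slotCLM U k (fun i => x (k.succAbove i) (jh i)) (y ε)‖₊) ^ q)
                    ^ (1/q)
                = (∑ jh : Fin (n+1) → Fin N, (∑ ε : Fin N → Bool, (((2:ℝ≥0))^N)⁻¹
                  * ‖slotCLM U k (fun i => x (k.succAbove i) (jh i)) (y ε)‖₊) ^ q)
                    ^ (1/q) := by
                  congr 1
                  refine Finset.sum_congr rfl fun jh _ => ?_
                  rw [Finset.mul_sum]
              _ ≤ ∑ ε : Fin N → Bool, (∑ jh : Fin (n+1) → Fin N, ((((2:ℝ≥0))^N)⁻¹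
                  * ‖slotCLM U k (fun i => x (k.succAbove i) (jh i)) (y ε)‖₊) ^ q)
                    ^ (1/q) := hmink
              _ = ∑ ε : Fin N → Bool, ((((2:ℝ≥0))^N)⁻¹
                  * (∑ jh : Fin (n+1) → Fin N,
                    ‖slotCLM U k (fun i => x (k.succAbove i) (jh i)) (y ε)‖₊ ^ q) ^ (1/q)) := by
                  refine Finset.sum_congr rfl fun ε _ => ?_
                  rw [show (∑ jh : Fin (n+1) → Fin N, ((((2:ℝ≥0))^N)⁻¹
                      * ‖slotCLM U k (fun i => x (k.succAbove i) (jh i)) (y ε)‖₊) ^ q)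
                      = ((((2:ℝ≥0))^N)⁻¹) ^ q * ∑ jh : Fin (n+1) → Fin N,
                        ‖slotCLM U k (fun i => x (k.succAbove i) (jh i)) (y ε)‖₊ ^ q from by
                    rw [Finset.mul_sum]
                    exact Finset.sum_congr rfl fun jh _ => by rw [NNReal.mul_rpow]]
                  rw [NNReal.mul_rpow, ← NNReal.rpow_mul]
                  congr 2
                  field_simp
                  rw [NNReal.rpow_one, mul_one_div_cancel (pow_ne_zero _ two_ne_zero)]
        _ ≤ (3:ℝ≥0)^((1:ℝ)/2) * ∑ ε : Fin N → Bool, ((((2:ℝ≥0))^N)⁻¹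
              * (3^(n+1) * (‖U‖₊ * wk 𝕜 (x k)) * ∏ i, wk 𝕜 (x (k.succAbove i)))) := by
            refine mul_le_mul_right (Finset.sum_le_sum fun ε _ =>
              mul_le_mul_right (hper ε) _) _
        _ = (3:ℝ≥0)^((1:ℝ)/2) * 3^(n+1) * (‖U‖₊ * ∏ t, wk 𝕜 (x t)) := by
            rw [Finset.sum_const, nsmul_eq_mul, hcard, hprodsplit]
            have h2N : ((2:ℝ≥0))^N ≠ 0 := pow_ne_zero _ two_ne_zero
            rw [← mul_assoc ((2:ℝ≥0)^N), mul_inv_cancel₀ h2N, one_mul]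
            ring
    -- ### Step 1 : Hölder / Blei
    have hpos1 : ∀ (k i : Fin (n+2)), 0 < ((if i = k then (2:ℝ) else q))/s := by
      intro k i
      split_ifs
      · exact div_pos (by norm_num) hs0
      · exact div_pos hq0 hs0
    have hsum1 : ∀ i : Fin (n+2), ∑ k : Fin (n+2), (((if i = k then (2:ℝ) else q))/s)⁻¹ = 1 := by
      intro i
      have h1 : ∀ k : Fin (n+2), (((if i = k then (2:ℝ) else q))/s)⁻¹
          = s/q + (if i = k then s/2 - s/q else 0) := by
        intro k
        split_ifs with h
        · rw [inv_div]; ring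
        · rw [inv_div]; ring
      rw [Finset.sum_congr rfl fun k _ => h1 k, Finset.sum_add_distrib, Finset.sum_const,
        Finset.sum_ite_eq, if_pos (Finset.mem_univ i), Finset.card_univ, Fintype.card_fin,
        nsmul_eq_mul]
      rw [hsdef, hqdef]
      have d1 : (n:ℝ)+1 ≠ 0 := by positivity
      have d2 : (n:ℝ)+2 ≠ 0 := by positivity
      have d3 : (n:ℝ)+3 ≠ 0 := by positivity
      push_cast
      field_simp <;> ring
    have step1 : ∑ j : Fin (n+2) → Fin N, A j ^ P
        ≤ ∏ k : Fin (n+2), (Tnorm q k A) ^ s := by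
      have hform : ∀ j : Fin (n+2) → Fin N, A j ^ P = ∏ _k : Fin (n+2), A j ^ s := by
        intro j
        rw [Finset.prod_const, Finset.card_univ, Fintype.card_fin,
          ← NNReal.rpow_natCast (A j ^ s) (n+2), ← NNReal.rpow_mul]
        congr 1
        rw [hsdef, hPdef]
        have d3 : (n:ℝ)+3 ≠ 0 := by positivity
        push_cast
        field_simp <;> ring
      calc ∑ j : Fin (n+2) → Fin N, A j ^ P
          = ∑ j : Fin (n+2) → Fin N, ∏ _k : Fin (n+2), A j ^ s :=
            Finset.sum_congr rfl fun j _ => hform j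
        _ ≤ ∏ k : Fin (n+2), Mnorm (fun i => ((if i = k then (2:ℝ) else q))/s)
              (fun j => A j ^ s) :=
            mixed_holder (fun k i => ((if i = k then (2:ℝ) else q))/s) hpos1 hsum1
              (fun _k => fun j => A j ^ s)
        _ = ∏ k : Fin (n+2), (Mnorm (fun i => if i = k then (2:ℝ) else q) A) ^ s := by
            refine Finset.prod_congr rfl fun k _ => ?_
            have hee : (fun i => ((if i = k then (2:ℝ) else q))/s * s)
                = (fun i => if i = k then (2:ℝ) else q) := by
              funext i
              rw [div_mul_cancel₀ _ hs0.ne']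
            rw [Mnorm_rpow (fun i => ((if i = k then (2:ℝ) else q))/s)
              (fun i => (hpos1 k i).ne') s hs0.ne' A, hee]
        _ ≤ ∏ k : Fin (n+2), (Tnorm q k A) ^ s :=
            Finset.prod_le_prod' fun k _ =>
              NNReal.rpow_le_rpow (Mnorm_le_T hq0 hq2 k A) hs0.le
    -- ### Final assembly
    have hCfin : s * ((((n+2:ℕ)):ℝ) * (1/P)) = 1 := by
      rw [hsdef, hPdef]
      have d2 : (n:ℝ)+2 ≠ 0 := by positivity
      have d3 : (n:ℝ)+3 ≠ 0 := by positivity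
      push_cast
      field_simp <;> ring
    calc (∑ j : Fin (n+2) → Fin N, A j ^ P) ^ (1/P)
        ≤ (∏ _k : Fin (n+2), ((3:ℝ≥0)^((1:ℝ)/2) * 3^(n+1)
            * (‖U‖₊ * ∏ t, wk 𝕜 (x t))) ^ s) ^ (1/P) := by
          apply NNReal.rpow_le_rpow _ (by positivity)
          exact step1.trans (Finset.prod_le_prod' fun k _ =>
            NNReal.rpow_le_rpow (step2 k) hs0.le)
      _ = (3:ℝ≥0)^((1:ℝ)/2) * 3^(n+1) * (‖U‖₊ * ∏ t, wk 𝕜 (x t)) := by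
          rw [Finset.prod_const, Finset.card_univ, Fintype.card_fin,
            ← NNReal.rpow_natCast ((((3:ℝ≥0)^((1:ℝ)/2) * 3^(n+1)
              * (‖U‖₊ * ∏ t, wk 𝕜 (x t)))) ^ s) (n+2),
            ← NNReal.rpow_mul, ← NNReal.rpow_mul, hCfin, NNReal.rpow_one]
      _ ≤ 3^(n+1+1) * ‖U‖₊ * ∏ t, wk 𝕜 (x t) := by
          have h12 : (3:ℝ≥0)^((1:ℝ)/2) ≤ 3 := by
            calc (3:ℝ≥0)^((1:ℝ)/2) ≤ (3:ℝ≥0)^((1:ℝ)) :=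
                NNReal.rpow_le_rpow_of_exponent_le (by norm_num) (by norm_num)
              _ = 3 := NNReal.rpow_one 3
          calc (3:ℝ≥0)^((1:ℝ)/2) * 3^(n+1) * (‖U‖₊ * ∏ t, wk 𝕜 (x t))
              ≤ 3 * 3^(n+1) * (‖U‖₊ * ∏ t, wk 𝕜 (x t)) :=
                mul_le_mul_left (mul_le_mul_left h12 _) _
            _ = 3^(n+1+1) * ‖U‖₊ * ∏ t, wk 𝕜 (x t) := by ring


end BH

/-- **Bohnenblust–Hille inequality** (rewritten form). For every `n ≥ 1` there is `C_n ≥ 0`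
such that for all Banach spaces `E 0, …, E (n-1)`, every continuous `n`-linear form `U`,
every `N` and all finite families `x k : Fin N → E k`,
`(∑_{j} |U (x (j ·))|^{2n/(n+1)})^{(n+1)/(2n)} ≤ C_n ‖U‖ ∏ₖ ‖(x k)‖_{w,1}`. -/
theorem bohnenblust_hille (𝕜 : Type*) [RCLike 𝕜] (n : ℕ) (hn : 0 < n) :
    ∃ C : ℝ, 0 ≤ C ∧
      ∀ (E : Fin n → Type) [∀ k, NormedAddCommGroup (E k)] [∀ k, NormedSpace 𝕜 (E k)]
        [∀ k, CompleteSpace (E k)] (U : ContinuousMultilinearMap 𝕜 E 𝕜) (N : ℕ)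
        (x : ∀ k, Fin N → E k),
        (∑ j : Fin n → Fin N, ‖U (fun k => x k (j k))‖ ^ ((2 * n : ℝ) / (n + 1))) ^
            ((n + 1 : ℝ) / (2 * n)) ≤
          C * ‖U‖ * ∏ k, weakNorm 𝕜 1 (x k) := by
  obtain ⟨m, rfl⟩ : ∃ m, n = m + 1 := ⟨n - 1, (Nat.succ_pred_eq_of_pos hn).symm⟩
  refine ⟨(3:ℝ)^(m+1), by positivity, ?_⟩
  intro E instG instS instC U N x
  have key := BH.master 𝕜 m E U N x
  rw [← NNReal.coe_le_coe] at key
  have hexp1 : (2 * ((m+1:ℕ):ℝ)) / (((m+1:ℕ):ℝ) + 1) = 2*((m:ℝ)+1)/((m:ℝ)+2) := by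
    push_cast; ring
  have hexp2 : (((m+1:ℕ):ℝ) + 1)/(2 * ((m+1:ℕ):ℝ)) = ((m:ℝ)+2)/(2*((m:ℝ)+1)) := by
    push_cast; ring
  rw [hexp1, hexp2]
  calc (∑ j : Fin (m+1) → Fin N,
          ‖U (fun k => x k (j k))‖ ^ (2*((m:ℝ)+1)/((m:ℝ)+2))) ^ (((m:ℝ)+2)/(2*((m:ℝ)+1)))
      = (((∑ j : Fin (m+1) → Fin N,
          ‖U (fun k => x k (j k))‖₊ ^ (2*((m:ℝ)+1)/((m:ℝ)+2)))
            ^ (((m:ℝ)+2)/(2*((m:ℝ)+1))) : ℝ≥0) : ℝ) := by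
        rw [NNReal.coe_rpow, NNReal.coe_sum]
        all_goals congr 1
        all_goals refine Finset.sum_congr rfl fun j _ => ?_
        all_goals rw [NNReal.coe_rpow, coe_nnnorm]
    _ ≤ ((3^(m+1) * ‖U‖₊ * ∏ k, BH.wk 𝕜 (x k) : ℝ≥0) : ℝ) := key
    _ = (3:ℝ)^(m+1) * ‖U‖ * ∏ k, weakNorm 𝕜 1 (x k) := by
        rw [NNReal.coe_mul, NNReal.coe_mul, NNReal.coe_pow, NNReal.coe_prod, coe_nnnorm]
        rw [Finset.prod_congr rfl fun k (_ : k ∈ Finset.univ) => BH.wk_coe (x k)]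
        norm_num
end
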